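/- arXiv:2307.15726 — 2 statements merged into one kernel-verified Lean document; each statement's English description precedes it below -/
import Mathlib

section
/- Let (W,S) be a Coxeter system, I ⊂ K, J ⊂ L finitary subsets of S, and π : W_I\W/W_J → W_K\W/W_L the quotient map. Then for any (K,L)-coset q, the preimage π⁻¹({p' : p' ≤ q}) equals the downward closure of π⁻¹(q) in the Bruhat order on (I,J)-cosets; that is, π(p) ≤ q if and only if there exists p' with π(p') = q and p ≤ p'. -/
namespace CoxeterPaper

open CoxeterSystem

variable {B : Type*} {W : Type*} [Group W] {M : CoxeterMatrix B}

/-- The Bruhat order on a Coxeter group: the reflexive-transitive closure of the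
relation `a < a * t` for `t` a reflection with length increasing. -/
def BruhatLE (cs : CoxeterSystem M W) (x y : W) : Prop :=
  Relation.ReflTransGen
    (fun a b => (∃ t, cs.IsReflection t ∧ b = a * t) ∧ cs.length a < cs.length b) x y

/-- One step of the Demazure product with a simple reflection. -/
noncomputable def demStep (cs : CoxeterSystem M W) (x : W) (i : B) : W :=
  if cs.length x < cs.length (x * cs.simple i) then x * cs.simple i else x

/-- The Demazure product of `x` with the word `l`. -/
noncomputable def demWord (cs : CoxeterSystem M W) (x : W) (l : List B) : W :=
  l.foldl (demStep cs) x

/-- The Demazure product (Coxeter monoid product) of two elements: fold the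
Demazure action of a reduced word of `y` onto `x`. -/
noncomputable def dem (cs : CoxeterSystem M W) (x y : W) : W :=
  demWord cs x (Classical.choose (cs.exists_reduced_word y))

/-- The standard parabolic subgroup attached to a set of simple indices. -/
def parabolic (cs : CoxeterSystem M W) (I : Set B) : Subgroup W :=
  Subgroup.closure (cs.simple '' I)

/-- `I` is finitary if the parabolic subgroup `W_I` is finite. -/
def Finitary (cs : CoxeterSystem M W) (I : Set B) : Prop :=
  (parabolic cs I : Set W).Finite

/-- The double coset `W_I w W_J` as a subset of `W`. -/
def doset (cs : CoxeterSystem M W) (I J : Set B) (w : W) : Set W :=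
  {x | ∃ a ∈ parabolic cs I, ∃ b ∈ parabolic cs J, x = a * w * b}

/-- `p` is an `(I,J)`-double coset. -/
def IsDCoset (cs : CoxeterSystem M W) (I J : Set B) (p : Set W) : Prop :=
  ∃ w, p = doset cs I J w

/-- `m` is the Bruhat-minimal element of `p`. -/
def IsMinOf (cs : CoxeterSystem M W) (p : Set W) (m : W) : Prop :=
  m ∈ p ∧ ∀ x ∈ p, BruhatLE cs m x

/-- `m` is the Bruhat-maximal element of `p`. -/
def IsMaxOf (cs : CoxeterSystem M W) (p : Set W) (m : W) : Prop :=
  m ∈ p ∧ ∀ x ∈ p, BruhatLE cs x m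

/-- `[I 0, …, I d]` is a singlestep expression. -/
def IsSinglestep (I : ℕ → Set B) (d : ℕ) : Prop :=
  ∀ k < d, (∃ s, s ∉ I k ∧ I (k + 1) = insert s (I k)) ∨
    (∃ s, s ∈ I k ∧ I (k + 1) = I k \ {s})

/-- `p` is a path subordinate to the singlestep expression `[I 0, …, I d]`. -/
def IsSubPath (cs : CoxeterSystem M W) (I : ℕ → Set B) (d : ℕ) (p : ℕ → Set W) : Prop :=
  p 0 = doset cs (I 0) (I 0) 1 ∧
  (∀ i ≤ d, IsDCoset cs (I 0) (I i) (p i)) ∧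
  ∀ k < d, (I k ⊆ I (k + 1) → p k ⊆ p (k + 1)) ∧ (I (k + 1) ⊆ I k → p (k + 1) ⊆ p k)

/-- The Demazure product `w_{I_0} * w_{I_1} * ⋯ * w_{I_d}` of the longest elements
`wI 0, …, wI d`. -/
noncomputable def exprMax (cs : CoxeterSystem M W) (wI : ℕ → W) (d : ℕ) : W :=
  ((List.range d).map fun k => wI (k + 1)).foldl (dem cs) (wI 0)

namespace Aux

open List

variable (cs : CoxeterSystem M W)


open scoped Classical

local prefix:100 "ℓ" => cs.length
local prefix:100 "π" => cs.wordProd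
local prefix:100 "σ" => cs.simple

theorem bruhat_refl (x : W) : BruhatLE cs x x := Relation.ReflTransGen.refl

theorem bruhat_trans {x y z : W} (h : BruhatLE cs x y) (h' : BruhatLE cs y z) :
    BruhatLE cs x z := Relation.ReflTransGen.trans h h'

theorem bruhat_step_right {x t : W} (ht : cs.IsReflection t)
    (hl : ℓ x < ℓ (x * t)) : BruhatLE cs x (x * t) :=
  Relation.ReflTransGen.single ⟨⟨t, ht, rfl⟩, hl⟩

theorem bruhat_step_left {x t : W} (ht : cs.IsReflection t)
    (hl : ℓ x < ℓ (t * x)) : BruhatLE cs x (t * x) := by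
  have h1 : t * x = x * (x⁻¹ * t * x) := by group
  have h2 : cs.IsReflection (x⁻¹ * t * x) := by
    simpa using ht.conj x⁻¹
  rw [h1] at hl ⊢
  exact bruhat_step_right cs h2 hl

theorem bruhat_length_le {x y : W} (h : BruhatLE cs x y) : ℓ x ≤ ℓ y := by
  induction h with
  | refl => exact le_refl _
  | tail _ h ih => exact ih.trans (le_of_lt h.2)

theorem bruhat_eq_of_length_le {x y : W} (h : BruhatLE cs x y) (hl : ℓ y ≤ ℓ x) :
    x = y := by
  cases h.cases_tail with
  | inl h => exact h.symm
  | inr h =>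
    obtain ⟨c, hxc, hc⟩ := h
    have := bruhat_length_le cs hxc
    omega

theorem bruhat_inv {x y : W} (h : BruhatLE cs x y) : BruhatLE cs x⁻¹ y⁻¹ := by
  induction h with
  | refl => exact bruhat_refl cs _
  | tail _ h ih =>
    rename_i b c _
    obtain ⟨⟨t, ht, rfl⟩, hl⟩ := h
    refine ih.tail ⟨⟨b * t * b⁻¹, ht.conj b, by rw [mul_inv_rev, ht.inv]; group⟩, ?_⟩
    rwa [cs.length_inv, cs.length_inv]




/-- The standard reflection-cocycle permutation attached to a simple generator. -/
noncomputable def sig (i : B) : Equiv.Perm (W × ZMod 2) :=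
  Function.Involutive.toPerm
    (fun p => (σ i * p.1 * σ i, p.2 + if p.1 = σ i then 1 else 0))
    (by
      rintro ⟨t, e⟩
      have hcond : (σ i * t * σ i = σ i) ↔ (t = σ i) := by
        constructor
        · intro h
          have h2 : σ i * (σ i * t * σ i) * σ i = σ i * σ i * σ i := by rw [h]
          have h3 : σ i * (σ i * t * σ i) * σ i = t := by
            simp [mul_assoc, cs.simple_mul_simple_cancel_left, cs.simple_mul_simple_self]
          rw [h3] at h2
          rw [h2, cs.simple_mul_simple_self, one_mul]
        · rintro rfl
          rw [cs.simple_mul_simple_self, one_mul]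
      simp only
      rw [hcond, Prod.mk.injEq]
      refine ⟨?_, ?_⟩
      · simp [mul_assoc, cs.simple_mul_simple_cancel_left]
      · simp only [add_assoc]
        rcases em (t = σ i) with h | h <;> simp [h] <;> decide)

theorem sig_apply (i : B) (t : W) (e : ZMod 2) :
    sig cs i (t, e) = (σ i * t * σ i, e + if t = σ i then 1 else 0) := rfl

theorem prod_sig_apply (ω : List B) (t : W) (e : ZMod 2) :
    ((ω.map (sig cs)).prod) (t, e) =
      (π ω * t * (π ω)⁻¹, e + ((cs.rightInvSeq ω).count t : ZMod 2)) := by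
  induction ω generalizing e with
  | nil => simp [wordProd_nil]
  | cons i ω ih =>
    rw [map_cons, prod_cons, Equiv.Perm.mul_apply, ih, sig_apply]
    have hris : cs.rightInvSeq (i :: ω) = ((π ω)⁻¹ * σ i * π ω) :: cs.rightInvSeq ω := rfl
    have hcond : (π ω * t * (π ω)⁻¹ = σ i) ↔ ((π ω)⁻¹ * σ i * π ω = t) := by
      constructor
      · intro h; rw [← h]; group
      · intro h; rw [← h]; group
    rw [hris, count_cons]
    have hc : ((cs.rightInvSeq ω).count t +
        (if (π ω)⁻¹ * σ i * π ω == t then 1 else 0) : ℕ) =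
        ((cs.rightInvSeq ω).count t : ℕ) + (if (π ω)⁻¹ * σ i * π ω = t then 1 else 0) := by
      simp [beq_iff_eq]
    rw [hc, Prod.mk.injEq]
    refine ⟨?_, ?_⟩
    · rw [cs.wordProd_cons, mul_inv_rev, cs.inv_simple]
      group
    · push_cast [apply_ite (Nat.cast : ℕ → ZMod 2)]
      rw [if_congr hcond rfl rfl]
      ring

/-- Decomposition of alternating words. -/
theorem alternatingWord_add (i j : B) (k n : ℕ) :
    alternatingWord i j (k + n) =
      alternatingWord (if Even n then i else j) (if Even n then j else i) k
        ++ alternatingWord i j n := by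
  induction k with
  | zero => simp [alternatingWord]
  | succ k ih =>
    have h1 : k + 1 + n = (k + n) + 1 := by omega
    rw [h1, alternatingWord_succ', ih, alternatingWord_succ', cons_append]
    congr 1
    by_cases hn : Even n <;> by_cases hk : Even k <;> simp [Nat.even_add, hn, hk]

/-- The `n`-th entry (from the right) of the inversion sequence of a long
alternating word. -/
noncomputable def ff (i j : B) (n : ℕ) : W :=
  (π (alternatingWord i j n))⁻¹ * σ (if Even n then j else i) * π (alternatingWord i j n)

theorem ris_alternatingWord (i j : B) (n : ℕ) :
    cs.rightInvSeq (alternatingWord i j n) = ((List.range n).reverse).map (ff cs i j) := by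
  induction n with
  | zero => simp [alternatingWord]
  | succ n ih =>
    rw [alternatingWord_succ']
    have : cs.rightInvSeq ((if Even n then j else i) :: alternatingWord i j n)
        = ((π (alternatingWord i j n))⁻¹ * σ (if Even n then j else i)
            * π (alternatingWord i j n)) :: cs.rightInvSeq (alternatingWord i j n) := rfl
    rw [this, ih, List.range_succ]
    simp [ff]

theorem ff_per (i j : B) (n : ℕ) (hm : 1 ≤ M i j) :
    ff cs i j (n + M i j) = ff cs i j n := by
  set m := M i j with hmdef
  set a := if Even n then i else j with ha
  set b := if Even n then j else i with hb
  have hMab : M a b = m := by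
    rcases em (Even n) with h | h <;> simp [ha, hb, h, hmdef, M.symmetric]
  have hadd : alternatingWord i j (m + n) = alternatingWord a b m ++ alternatingWord i j n := by
    rw [alternatingWord_add i j m n, ← ha, ← hb]
  have hc' : (if Even (n + m) then j else i) = (if Even m then b else a) := by
    by_cases h : Even n <;> by_cases h' : Even m <;>
      simp [Nat.even_add, h, h', ha, hb]
  have key : σ (if Even (n + m) then j else i) * π (alternatingWord a b m)
      = π (alternatingWord a b m) * σ b := by
    have lhs : σ (if Even (n + m) then j else i) * π (alternatingWord a b m)
        = π (alternatingWord a b (m + 1)) := by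
      rw [alternatingWord_succ' a b m, cs.wordProd_cons, hc']
    have rhs : π (alternatingWord a b m) * σ b = π (alternatingWord b a (m - 1)) := by
      have h1 : alternatingWord a b m = (alternatingWord b a (m - 1)).concat b := by
        conv_lhs => rw [show m = m - 1 + 1 by omega]
        exact alternatingWord_succ a b (m - 1)
      rw [h1, List.concat_eq_append, cs.wordProd_append]
      simp [cs.wordProd_singleton, mul_assoc, cs.simple_mul_simple_self]
    have h2 : m + 1 ≤ M a b * 2 := by rw [hMab]; omega
    have h3 := cs.prod_alternatingWord_eq_prod_alternatingWord_sub a b (m + 1) h2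
    rw [hMab] at h3
    have h4 : m * 2 - (m + 1) = m - 1 := by omega
    rw [h4] at h3
    rw [lhs, rhs, h3]
  unfold ff
  have hnm : n + m = m + n := by omega
  rw [hnm, hadd, cs.wordProd_append]
  rw [mul_inv_rev]
  have : σ (if Even (m + n) then j else i) = σ (if Even (n + m) then j else i) := by
    rw [hnm]
  rw [this]
  have expand : (π (alternatingWord a b m))⁻¹
      * (σ (if Even (n + m) then j else i) * π (alternatingWord a b m)) = σ b := by
    rw [key, inv_mul_cancel_left]
  calc (π (alternatingWord i j n))⁻¹ * (π (alternatingWord a b m))⁻¹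
        * σ (if Even (n + m) then j else i)
        * (π (alternatingWord a b m) * π (alternatingWord i j n))
      = (π (alternatingWord i j n))⁻¹ * ((π (alternatingWord a b m))⁻¹
        * (σ (if Even (n + m) then j else i) * π (alternatingWord a b m)))
        * π (alternatingWord i j n) := by group
    _ = (π (alternatingWord i j n))⁻¹ * σ b * π (alternatingWord i j n) := by rw [expand]
    _ = (π (alternatingWord i j n))⁻¹ * σ (if Even n then j else i)
        * π (alternatingWord i j n) := by rw [← hb]

theorem sig_liftable : M.IsLiftable (sig cs) := by
  intro i j
  rcases Nat.eq_zero_or_pos (M i j) with h0 | hpos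
  · rw [h0, pow_zero]
  · set m := M i j with hm
    have hpow : ∀ k : ℕ, ((alternatingWord i j (2 * k)).map (sig cs)).prod
        = (sig cs i * sig cs j) ^ k := by
      intro k
      induction k with
      | zero => simp [alternatingWord]
      | succ k ih =>
        have h1 : 2 * (k + 1) = (2 * k + 1) + 1 := by omega
        rw [h1, alternatingWord_succ', alternatingWord_succ']
        have e1 : (if Even (2 * k + 1) then j else i) = i := by
          simp [Nat.even_add_one, Nat.even_mul]
        have e2 : (if Even (2 * k) then j else i) = j := by simp [Nat.even_mul]
        rw [e1, e2, List.map_cons, List.map_cons, List.prod_cons, List.prod_cons, ih,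
          pow_succ']
        rw [mul_assoc]
    rw [← hpow m]
    refine Equiv.ext fun p => ?_
    obtain ⟨t, e⟩ := p
    rw [prod_sig_apply]
    have hπ : π (alternatingWord i j (2 * m)) = 1 := by
      rw [cs.prod_alternatingWord_eq_mul_pow]
      have : Even (2 * m) := even_two_mul m
      rw [if_pos this]
      have : 2 * m / 2 = m := by omega
      rw [this, one_mul, hm, cs.simple_mul_simple_pow]
    have hcount : ∃ c : ℕ, (cs.rightInvSeq (alternatingWord i j (2 * m))).count t = c + c := by
      rw [ris_alternatingWord]
      have h2 : 2 * m = m + m := by omega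
      rw [List.map_reverse, List.count_reverse, h2, List.range_add, List.map_append,
        List.count_append, List.map_map]
      have h3 : (List.range m).map (ff cs i j ∘ fun k => m + k)
          = (List.range m).map (ff cs i j) := by
        apply List.map_congr_left
        intro k _
        show ff cs i j (m + k) = ff cs i j k
        rw [Nat.add_comm m k]
        exact ff_per cs i j k hpos
      rw [h3]
      exact ⟨_, rfl⟩
    obtain ⟨c, hc⟩ := hcount
    rw [hπ, hc]
    have : ((c + c : ℕ) : ZMod 2) = 0 := by
      push_cast
      have : ∀ x : ZMod 2, x + x = 0 := by decide
      exact this _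
    rw [this]
    simp

/-- The cocycle homomorphism. -/
noncomputable def nlift : W →* Equiv.Perm (W × ZMod 2) := cs.lift ⟨sig cs, sig_liftable cs⟩

theorem nlift_wordProd (ω : List B) : nlift cs (π ω) = ((ω.map (sig cs)).prod) := by
  induction ω with
  | nil => simp [cs.wordProd_nil]
  | cons i ω ih =>
    rw [cs.wordProd_cons, map_mul, ih, List.map_cons, List.prod_cons]
    congr 1
    exact cs.lift_apply_simple (sig_liftable cs) i

/-- The reflection cocycle. -/
noncomputable def nn (w t : W) : ZMod 2 := ((nlift cs w) (t, 0)).2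

theorem nn_eq_count (ω : List B) (t : W) :
    nn cs (π ω) t = ((cs.rightInvSeq ω).count t : ZMod 2) := by
  rw [nn, nlift_wordProd, prod_sig_apply]
  simp

theorem nlift_apply (w t : W) (e : ZMod 2) :
    (nlift cs w) (t, e) = (w * t * w⁻¹, e + nn cs w t) := by
  obtain ⟨ω, _, rfl⟩ := cs.exists_reduced_word' w
  rw [nlift_wordProd, prod_sig_apply, nn_eq_count]

theorem nn_mul (u v t : W) : nn cs (u * v) t = nn cs v t + nn cs u (v * t * v⁻¹) := by
  have h1 : (nlift cs (u * v)) (t, 0) = (nlift cs u) ((nlift cs v) (t, 0)) := by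
    rw [map_mul]; rfl
  rw [nn, h1, nlift_apply, nlift_apply]
  simp

theorem nn_simple (i : B) (t : W) : nn cs (σ i) t = if t = σ i then 1 else 0 := by
  rw [nn]
  have : nlift cs (σ i) = sig cs i := cs.lift_apply_simple (sig_liftable cs) i
  rw [this, sig_apply]
  simp

theorem nn_refl_self {t : W} (ht : cs.IsReflection t) : nn cs t t = 1 := by
  obtain ⟨w, i, rfl⟩ := ht
  set t := w * σ i * w⁻¹ with htdef
  have h0 : nn cs 1 t = 0 := by
    rw [nn, map_one]; rfl
  have h1 := nn_mul cs (w * σ i) w⁻¹ t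
  rw [inv_inv] at h1
  have h2 : w⁻¹ * t * w = σ i := by rw [htdef]; group
  have h3 := nn_mul cs w (σ i) (σ i)
  rw [cs.simple_mul_simple_self, one_mul, cs.inv_simple] at h3
  have h4 : nn cs (σ i) (σ i) = 1 := by rw [nn_simple]; simp
  have h5 := nn_mul cs w w⁻¹ t
  rw [inv_inv, mul_inv_cancel] at h5
  rw [h0] at h5
  rw [h2] at h5 h1
  rw [h3, h4] at h1
  have hgen : ∀ a b : ZMod 2, 0 = a + b → a + (1 + b) = 1 := by decide
  rw [← htdef] at h1
  rw [h1]
  exact hgen _ _ h5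

theorem length_lt_of_nn_eq_one {w t : W} (ht : cs.IsReflection t) (h : nn cs w t = 1) :
    ℓ (w * t) < ℓ w := by
  obtain ⟨ω, hred, rfl⟩ := cs.exists_reduced_word' w
  rw [nn_eq_count] at h
  have hne : (cs.rightInvSeq ω).count t ≠ 0 := by
    intro h0
    rw [h0] at h
    simp at h
  have hmem : t ∈ cs.rightInvSeq ω := by
    rw [← List.count_pos_iff]
    omega
  exact (cs.isRightInversion_of_mem_rightInvSeq hred hmem).2

theorem nn_eq_one_of_isRightInversion {w t : W} (hinv : cs.IsRightInversion w t) :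
    nn cs w t = 1 := by
  obtain ⟨ht, hlen⟩ := hinv
  set v := w * t with hv
  have hw : w = v * t := by
    rw [hv, mul_assoc, ht.mul_self, mul_one]
  have h1 : nn cs (v * t) t = nn cs t t + nn cs v (t * t * t⁻¹) := nn_mul cs v t t
  have h2 : t * t * t⁻¹ = t := by rw [ht.mul_self, one_mul, ht.inv]
  have h3 : nn cs v t ≠ 1 := by
    intro hcon
    have := length_lt_of_nn_eq_one cs ht hcon
    rw [← hw] at this
    omega
  have h4 : nn cs v t = 0 := by
    revert h3; generalize nn cs v t = x; revert x; decide
  rw [hw, h1, h2, h4, nn_refl_self cs ht]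
  rfl

theorem strong_exchange (ω : List B) {t : W} (ht : cs.IsReflection t)
    (hl : ℓ (π ω * t) < ℓ (π ω)) :
    ∃ j < ω.length, π (ω.eraseIdx j) = π ω * t := by
  have h1 : nn cs (π ω) t = 1 := nn_eq_one_of_isRightInversion cs ⟨ht, hl⟩
  rw [nn_eq_count] at h1
  have hne : (cs.rightInvSeq ω).count t ≠ 0 := by
    intro h0; rw [h0] at h1; simp at h1
  have hmem : t ∈ cs.rightInvSeq ω := by
    rw [← List.count_pos_iff]; omega
  obtain ⟨j, hj, hget⟩ := List.mem_iff_getElem.mp hmem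
  rw [cs.length_rightInvSeq] at hj
  refine ⟨j, hj, ?_⟩
  have := cs.wordProd_mul_getD_rightInvSeq ω j
  rw [List.getD_eq_getElem _ 1 (by rw [cs.length_rightInvSeq]; exact hj)] at this
  rw [hget] at this
  exact this.symm


/-! ### Deletion, subword properties, lifting lemmas -/

theorem exists_reduced_sublist : ∀ (n : ℕ) (ω : List B), ω.length ≤ n →
    ∃ κ, κ.Sublist ω ∧ cs.IsReduced κ ∧ π κ = π ω := by
  intro n
  induction n with
  | zero =>
    intro ω hω
    have : ω = [] := List.eq_nil_of_length_eq_zero (by omega)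
    subst this
    exact ⟨[], List.Sublist.refl _, by simp [CoxeterSystem.IsReduced, cs.wordProd_nil], rfl⟩
  | succ n ih =>
    intro ω hω
    by_cases hred : cs.IsReduced ω
    · exact ⟨ω, List.Sublist.refl _, hred, rfl⟩
    · have hbad : ¬ cs.IsReduced (ω.take ω.length) := by
        rwa [List.take_length]
      have h0 : cs.IsReduced (ω.take 0) := by
        simp [CoxeterSystem.IsReduced, cs.wordProd_nil]
      -- find minimal bad prefix
      have hex : ∃ k, ¬ cs.IsReduced (ω.take k) := ⟨ω.length, hbad⟩
      classical
      set k0 := Nat.find hex with hk0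
      have hk0bad : ¬ cs.IsReduced (ω.take k0) := Nat.find_spec hex
      have hk0pos : 0 < k0 := by
        rcases Nat.eq_zero_or_pos k0 with h | h
        · rw [h] at hk0bad; exact absurd h0 hk0bad
        · exact h
      set k := k0 - 1 with hkdef
      have hkgood : cs.IsReduced (ω.take k) := by
        by_contra hcon
        have := Nat.find_min hex (m := k) (by omega)
        exact this hcon
      have hkk0 : k + 1 = k0 := by omega
      have hklt : k < ω.length := by
        by_contra hcon
        push_neg at hcon
        have : ω.take k = ω := List.take_of_length_le hcon
        rw [this] at hkgood
        exact hred hkgood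
      have htakesucc : ω.take (k + 1) = ω.take k ++ [ω[k]] := by
        rw [List.take_succ, List.getElem?_eq_getElem hklt]
        rfl
      have hlen_take : (ω.take k).length = k := by
        rw [List.length_take]; omega
      have hbadk1 : ¬ cs.IsReduced (ω.take (k + 1)) := by rw [hkk0]; exact hk0bad
      have hπsucc : π (ω.take (k + 1)) = π (ω.take k) * σ (ω[k]) := by
        rw [htakesucc, cs.wordProd_append, cs.wordProd_singleton]
      have hlk : ℓ (π (ω.take k)) = k := by
        have := hkgood
        rw [CoxeterSystem.IsReduced] at this
        rw [this, hlen_take]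
      have hdrop : ℓ (π (ω.take k) * σ (ω[k])) < ℓ (π (ω.take k)) := by
        rcases cs.length_mul_simple (π (ω.take k)) ω[k] with h | h
        · exfalso
          apply hbadk1
          rw [CoxeterSystem.IsReduced, hπsucc, h, hlk]
          rw [List.length_take]; omega
        · omega
      obtain ⟨j, hjlt, hje⟩ := strong_exchange cs (ω.take k) (cs.isReflection_simple _) hdrop
      set ω' := (ω.take k).eraseIdx j ++ ω.drop (k + 1) with hω'
      have hπω' : π ω' = π ω := by
        rw [hω', cs.wordProd_append, hje, ← hπsucc, ← cs.wordProd_append,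
          List.take_append_drop]
      have hsubω' : ω'.Sublist ω := by
        have h1 : ((ω.take k).eraseIdx j).Sublist (ω.take (k + 1)) := by
          refine List.Sublist.trans (List.eraseIdx_sublist _ j) ?_
          rw [htakesucc]
          exact List.sublist_append_left _ _ |>.trans (List.Sublist.refl _)
        have h2 := List.Sublist.append h1 (List.Sublist.refl (ω.drop (k + 1)))
        rw [List.take_append_drop] at h2
        exact h2
      have hlenω' : ω'.length ≤ n := by
        have e1 : ((ω.take k).eraseIdx j).length = k - 1 := by
          rw [List.length_eraseIdx]
          rw [hlen_take]
          simp only [if_pos (by omega : j < k)]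
        have e2 : (ω.drop (k + 1)).length = ω.length - (k + 1) := by
          rw [List.length_drop]
        rw [hω', List.length_append, e1, e2]
        omega
      obtain ⟨κ, hs, hr, hp⟩ := ih ω' hlenω'
      exact ⟨κ, hs.trans hsubω', hr, by rw [hp, hπω']⟩

theorem exists_reduced_sublist_of_bruhatLE {x y : W} (h : BruhatLE cs x y) :
    ∀ ω, cs.IsReduced ω → π ω = y → ∃ κ, κ.Sublist ω ∧ cs.IsReduced κ ∧ π κ = x := by
  induction h with
  | refl => exact fun ω hω hπ => ⟨ω, List.Sublist.refl ω, hω, hπ⟩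
  | tail hxz hzy ih =>
    rename_i z y'
    obtain ⟨⟨t, ht, rfl⟩, hlen⟩ := hzy
    intro ω hred hπ
    have hexch : ℓ (π ω * t) < ℓ (π ω) := by
      rw [hπ, mul_assoc, ht.mul_self, mul_one]
      exact hlen
    obtain ⟨j, hj, hje⟩ := strong_exchange cs ω ht hexch
    obtain ⟨κ', hsub', hred', hπ'⟩ := exists_reduced_sublist cs (ω.eraseIdx j).length
      (ω.eraseIdx j) le_rfl
    have hπκ' : π κ' = z := by
      rw [hπ', hje, hπ, mul_assoc, ht.mul_self, mul_one]
    obtain ⟨κ, hsub, hredk, hπk⟩ := ih κ' hred' hπκ'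
    exact ⟨κ, hsub.trans (hsub'.trans (List.eraseIdx_sublist ω j)), hredk, hπk⟩

theorem length_mul_simple_lt {x : W} {i : B} (h : ¬ ℓ x < ℓ (x * σ i)) :
    ℓ (x * σ i) < ℓ x := by
  have := cs.length_mul_simple_ne x i
  omega

theorem length_mul_simple_gt {x : W} {i : B} (h : ¬ ℓ (x * σ i) < ℓ x) :
    ℓ x < ℓ (x * σ i) := by
  have := cs.length_mul_simple_ne x i
  omega

theorem bruhat_desc_right {x : W} {i : B} (h : ℓ (x * σ i) < ℓ x) :
    BruhatLE cs (x * σ i) x := by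
  have h1 : BruhatLE cs (x * σ i) ((x * σ i) * σ i) := by
    apply bruhat_step_right cs (cs.isReflection_simple i)
    rwa [cs.simple_mul_simple_cancel_right]
  rwa [cs.simple_mul_simple_cancel_right] at h1

private theorem master (n : ℕ) :
    (∀ u x : W, ∀ i : B, ℓ u ≤ n → BruhatLE cs x u → ℓ u < ℓ (u * σ i) →
       BruhatLE cs (x * σ i) (u * σ i)) ∧
    (∀ u x : W, ∀ i : B, ℓ u ≤ n → BruhatLE cs x u → ℓ x < ℓ (x * σ i) →
       ℓ (u * σ i) < ℓ u → BruhatLE cs (x * σ i) u) ∧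
    (∀ ω κ : List B, ω.length ≤ n → cs.IsReduced ω → κ.Sublist ω →
       BruhatLE cs (π κ) (π ω)) := by
  induction n with
  | zero =>
    refine ⟨?_, ?_, ?_⟩
    · intro u x i hu hxu hus
      have hx : x = u := by
        apply bruhat_eq_of_length_le cs hxu
        have := bruhat_length_le cs hxu
        omega
      subst hx
      exact bruhat_refl cs _
    · intro u x i hu hxu hxs hus
      omega
    · intro ω κ hlen hred hsub
      have : ω = [] := List.eq_nil_of_length_eq_zero (by omega)
      subst this
      have : κ = [] := List.sublist_nil.mp hsub
      subst this
      exact bruhat_refl cs _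
  | succ n ih =>
    obtain ⟨IHL, IHY, IHB⟩ := ih
    have L : ∀ u x : W, ∀ i : B, ℓ u ≤ n + 1 → BruhatLE cs x u → ℓ u < ℓ (u * σ i) →
        BruhatLE cs (x * σ i) (u * σ i) := by
      intro u x i hu hxu hus
      by_cases hxs : ℓ (x * σ i) < ℓ x
      · exact bruhat_trans cs (bruhat_desc_right cs hxs)
          (bruhat_trans cs hxu (bruhat_step_right cs (cs.isReflection_simple i) hus))
      · have hxs' := length_mul_simple_gt cs hxs
        rcases hxu.cases_tail with heq | ⟨z, hxz, hstep⟩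
        · subst heq; exact bruhat_refl cs _
        · obtain ⟨⟨t, ht, rfl⟩, hlz⟩ := hstep
          have hzn : ℓ z ≤ n := by omega
          by_cases hzs : ℓ z < ℓ (z * σ i)
          · have h2 := IHL z x i hzn hxz hzs
            have hrefl' : cs.IsReflection ((σ i)⁻¹ * t * σ i) := by
              have := ht.conj (σ i)⁻¹
              simpa using this
            have heq2 : (z * σ i) * ((σ i)⁻¹ * t * σ i) = (z * t) * σ i := by group
            have hlen2 : ℓ (z * σ i) < ℓ ((z * t) * σ i) := by
              rcases cs.length_mul_simple z i with h | h
              · omega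
              · omega
            have h3 : BruhatLE cs (z * σ i) ((z * t) * σ i) := by
              have := bruhat_step_right cs hrefl' (x := z * σ i) (by rw [heq2]; exact hlen2)
              rwa [heq2] at this
            exact bruhat_trans cs h2 h3
          · have hzs' := length_mul_simple_lt cs hzs
            have h2 := IHY z x i hzn hxz hxs' hzs'
            exact bruhat_trans cs h2 (bruhat_trans cs
              (bruhat_step_right cs ht hlz)
              (bruhat_step_right cs (cs.isReflection_simple i) hus))
    refine ⟨L, ?_, ?_⟩
    · -- Y
      intro u x i hu hxu hxs hus
      rcases hxu.cases_tail with heq | ⟨z, hxz, hstep⟩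
      · subst heq; omega
      · obtain ⟨⟨t, ht, rfl⟩, hlz⟩ := hstep
        have hzn : ℓ z ≤ n := by omega
        by_cases hzs : ℓ (z * σ i) < ℓ z
        · have h2 := IHY z x i hzn hxz hxs hzs
          exact bruhat_trans cs h2 (bruhat_step_right cs ht hlz)
        · have hzs' := length_mul_simple_gt cs hzs
          -- build reduced word of u := z * t ending in i
          set u := z * t with hudef
          have hlus : ℓ u = ℓ (u * σ i) + 1 := by
            rcases cs.length_mul_simple u i with h | h
            · omega
            · omega
          obtain ⟨κ, hκred, hκπ⟩ := cs.exists_reduced_word' (u * σ i)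
          set ω : List B := κ ++ [i] with hωdef
          have hπω : π ω = u := by
            rw [hωdef, cs.wordProd_append, cs.wordProd_singleton, ← hκπ,
              cs.simple_mul_simple_cancel_right]
          have hκlen : κ.length = ℓ (u * σ i) := by
            rw [CoxeterSystem.IsReduced] at hκred
            rw [← hκred, ← hκπ]
          have hωred : cs.IsReduced ω := by
            rw [CoxeterSystem.IsReduced, hπω, hωdef, List.length_append]
            simp [hκlen, hlus]
          have hexch : ℓ (π ω * t) < ℓ (π ω) := by
            rw [hπω, hudef, mul_assoc, ht.mul_self, mul_one]
            exact hlz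
          obtain ⟨j, hjlt, hje⟩ := strong_exchange cs ω ht hexch
          have hπωt : π ω * t = z := by
            rw [hπω, hudef, mul_assoc, ht.mul_self, mul_one]
          rw [hπωt] at hje
          by_cases hjκ : j < κ.length
          · have herase : ω.eraseIdx j = κ.eraseIdx j ++ [i] := by
              rw [hωdef]
              exact List.eraseIdx_append_of_lt_length hjκ _
            have hzσ : z * σ i = π (κ.eraseIdx j) := by
              rw [← hje, herase, cs.wordProd_append, cs.wordProd_singleton,
                cs.simple_mul_simple_cancel_right]
            have hκn : κ.length ≤ n := by omega
            have h3 : BruhatLE cs (π (κ.eraseIdx j)) (π κ) :=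
              IHB κ (κ.eraseIdx j) hκn hκred (List.eraseIdx_sublist κ j)
            have h4 : BruhatLE cs (z * σ i) (u * σ i) := by
              rw [hzσ, hκπ]
              exact h3
            have h2 := IHL z x i hzn hxz hzs'
            refine bruhat_trans cs h2 (bruhat_trans cs h4 ?_)
            have : BruhatLE cs (u * σ i) ((u * σ i) * σ i) :=
              bruhat_step_right cs (cs.isReflection_simple i)
                (by rw [cs.simple_mul_simple_cancel_right]; omega)
            rwa [cs.simple_mul_simple_cancel_right] at this
          · have hjeq : j = κ.length := by
              rw [hωdef, List.length_append] at hjlt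
              simp at hjlt
              omega
            have herase : ω.eraseIdx j = κ := by
              rw [hωdef, hjeq, List.eraseIdx_append_of_length_le le_rfl]
              simp
            have hz : z = u * σ i := by
              rw [← hje, herase, hκπ]
            have h2 := IHL z x i hzn hxz hzs'
            rw [hz, cs.simple_mul_simple_cancel_right] at h2
            exact h2
    · -- B
      intro ω κ hlen hred hsub
      rcases List.eq_nil_or_concat ω with rfl | ⟨ω₀, a, rfl⟩
      · have : κ = [] := List.sublist_nil.mp hsub
        subst this
        exact bruhat_refl cs _
      · rw [List.concat_eq_append] at hsub hred hlen ⊢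
        have hω₀red : cs.IsReduced ω₀ := by
          have := hred.take ω₀.length
          rwa [List.take_left] at this
        have hω₀n : ω₀.length ≤ n := by
          rw [List.length_append] at hlen
          simp at hlen
          omega
        have hstep : ℓ (π ω₀) < ℓ (π ω₀ * σ a) := by
          have h1 : ℓ (π ω₀) = ω₀.length := hω₀red
          have h2 : ℓ (π ω₀ * σ a) = ω₀.length + 1 := by
            rw [← cs.wordProd_singleton, ← cs.wordProd_append]
            have := hred
            rw [CoxeterSystem.IsReduced] at this
            rw [this, List.length_append]
            rfl
          omega
        rw [List.sublist_append_iff] at hsub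
        obtain ⟨l₁, l₂, rfl, hl₁, hl₂⟩ := hsub
        rcases List.sublist_singleton.mp hl₂ with rfl | rfl
        · have h1 := IHB ω₀ l₁ hω₀n hω₀red hl₁
          rw [List.append_nil]
          refine bruhat_trans cs h1 ?_
          rw [cs.wordProd_append, cs.wordProd_singleton]
          exact bruhat_step_right cs (cs.isReflection_simple a) hstep
        · have h1 := IHB ω₀ l₁ hω₀n hω₀red hl₁
          have h2 := L (π ω₀) (π l₁) a (by
            have h3 : ℓ (π ω₀) = ω₀.length := hω₀red
            omega) h1 hstep
          rw [cs.wordProd_append, cs.wordProd_singleton,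
            cs.wordProd_append, cs.wordProd_singleton]
          exact h2

theorem lemma_L {x u : W} {i : B} (hxu : BruhatLE cs x u) (hus : ℓ u < ℓ (u * σ i)) :
    BruhatLE cs (x * σ i) (u * σ i) :=
  (master cs (ℓ u)).1 u x i le_rfl hxu hus

theorem lemma_Y {x u : W} {i : B} (hxu : BruhatLE cs x u) (hxs : ℓ x < ℓ (x * σ i))
    (hus : ℓ (u * σ i) < ℓ u) : BruhatLE cs (x * σ i) u :=
  (master cs (ℓ u)).2.1 u x i le_rfl hxu hxs hus

theorem dirB {ω κ : List B} (hred : cs.IsReduced ω) (hsub : κ.Sublist ω) :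
    BruhatLE cs (π κ) (π ω) :=
  (master cs ω.length).2.2 ω κ le_rfl hred hsub

theorem lemma_Z2 {x u : W} {i : B} (hxu : BruhatLE cs x u) (hxs : ℓ x < ℓ (x * σ i))
    (hus : ℓ (u * σ i) < ℓ u) : BruhatLE cs x (u * σ i) := by
  obtain ⟨κ, hκred, hκπ⟩ := cs.exists_reduced_word' (u * σ i)
  have hlus : ℓ u = ℓ (u * σ i) + 1 := by
    rcases cs.length_mul_simple u i with h | h
    · omega
    · omega
  set ω : List B := κ ++ [i] with hωdef
  have hπω : π ω = u := by
    rw [hωdef, cs.wordProd_append, cs.wordProd_singleton, ← hκπ,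
      cs.simple_mul_simple_cancel_right]
  have hκlen : κ.length = ℓ (u * σ i) := by
    rw [CoxeterSystem.IsReduced] at hκred
    rw [← hκred, ← hκπ]
  have hωred : cs.IsReduced ω := by
    rw [CoxeterSystem.IsReduced, hπω, hωdef, List.length_append]
    simp [hκlen, hlus]
  obtain ⟨κ', hsub, hred', hπ'⟩ := exists_reduced_sublist_of_bruhatLE cs hxu ω hωred hπω
  rw [hωdef, List.sublist_append_iff] at hsub
  obtain ⟨l₁, l₂, rfl, hl₁, hl₂⟩ := hsub
  rcases List.sublist_singleton.mp hl₂ with rfl | rfl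
  · rw [List.append_nil] at hπ' hred'
    have := dirB cs hκred hl₁
    rw [hπ', ← hκπ] at this
    exact this
  · exfalso
    have hxval : x = π l₁ * σ i := by
      rw [← hπ', cs.wordProd_append, cs.wordProd_singleton]
    have hxlen : ℓ x = l₁.length + 1 := by
      rw [← hπ']
      rw [CoxeterSystem.IsReduced] at hred'
      rw [hred', List.length_append]
      rfl
    have hxσ : x * σ i = π l₁ := by
      rw [hxval, cs.simple_mul_simple_cancel_right]
    have : ℓ (x * σ i) ≤ l₁.length := by
      rw [hxσ]
      exact (cs.length_wordProd_le l₁)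
    omega

theorem lemma_Zp {x u : W} {i : B} (hxu : BruhatLE cs x u) (hxs : ℓ (x * σ i) < ℓ x)
    (hus : ℓ (u * σ i) < ℓ u) : BruhatLE cs (x * σ i) (u * σ i) := by
  have h1 : BruhatLE cs (x * σ i) u := bruhat_trans cs (bruhat_desc_right cs hxs) hxu
  have h2 : ℓ (x * σ i) < ℓ ((x * σ i) * σ i) := by
    rw [cs.simple_mul_simple_cancel_right]; omega
  exact lemma_Z2 cs h1 h2 hus

/-! ### Left-handed versions -/

theorem length_simple_mul_eq_inv {x : W} {i : B} : ℓ (σ i * x) = ℓ (x⁻¹ * σ i) := by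
  rw [← cs.length_inv (σ i * x), mul_inv_rev, cs.inv_simple]

theorem lemma_L_left {x u : W} {i : B} (hxu : BruhatLE cs x u) (hus : ℓ u < ℓ (σ i * u)) :
    BruhatLE cs (σ i * x) (σ i * u) := by
  have h1 := bruhat_inv cs hxu
  have h2 : ℓ u⁻¹ < ℓ (u⁻¹ * σ i) := by
    rw [← length_simple_mul_eq_inv cs, cs.length_inv]
    exact hus
  have h3 := lemma_L cs h1 h2
  have h4 := bruhat_inv cs h3
  simpa [mul_inv_rev, cs.inv_simple] using h4

theorem lemma_Y_left {x u : W} {i : B} (hxu : BruhatLE cs x u) (hxs : ℓ x < ℓ (σ i * x))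
    (hus : ℓ (σ i * u) < ℓ u) : BruhatLE cs (σ i * x) u := by
  have h1 := bruhat_inv cs hxu
  have h3 := lemma_Y cs h1
    (by rw [← length_simple_mul_eq_inv cs, cs.length_inv]; exact hxs)
    (by rw [← length_simple_mul_eq_inv cs, cs.length_inv]; exact hus)
  have h4 := bruhat_inv cs h3
  simpa [mul_inv_rev, cs.inv_simple] using h4

theorem lemma_Z2_left {x u : W} {i : B} (hxu : BruhatLE cs x u) (hxs : ℓ x < ℓ (σ i * x))
    (hus : ℓ (σ i * u) < ℓ u) : BruhatLE cs x (σ i * u) := by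
  have h1 := bruhat_inv cs hxu
  have h3 := lemma_Z2 cs h1
    (by rw [← length_simple_mul_eq_inv cs, cs.length_inv]; exact hxs)
    (by rw [← length_simple_mul_eq_inv cs, cs.length_inv]; exact hus)
  have h4 := bruhat_inv cs h3
  simpa [mul_inv_rev, cs.inv_simple] using h4

theorem lemma_Zp_left {x u : W} {i : B} (hxu : BruhatLE cs x u) (hxs : ℓ (σ i * x) < ℓ x)
    (hus : ℓ (σ i * u) < ℓ u) : BruhatLE cs (σ i * x) (σ i * u) := by
  have h1 := bruhat_inv cs hxu
  have h3 := lemma_Zp cs h1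
    (by rw [← length_simple_mul_eq_inv cs, cs.length_inv]; exact hxs)
    (by rw [← length_simple_mul_eq_inv cs, cs.length_inv]; exact hus)
  have h4 := bruhat_inv cs h3
  simpa [mul_inv_rev, cs.inv_simple] using h4


/-! ### Parabolic subgroups and double cosets -/

theorem mem_parabolic_iff {I : Set B} {a : W} :
    a ∈ parabolic cs I ↔ ∃ ω : List B, (∀ b ∈ ω, b ∈ I) ∧ a = π ω := by
  constructor
  · intro h
    induction h using Subgroup.closure_induction with
    | mem g hg =>
      obtain ⟨i, hi, rfl⟩ := hg
      exact ⟨[i], by simpa using hi, by rw [cs.wordProd_singleton]⟩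
    | one => exact ⟨[], by simp, by rw [cs.wordProd_nil]⟩
    | mul g h _ _ ihg ihh =>
      obtain ⟨ω₁, h₁, rfl⟩ := ihg
      obtain ⟨ω₂, h₂, rfl⟩ := ihh
      exact ⟨ω₁ ++ ω₂, by
        intro b hb
        rcases List.mem_append.mp hb with h | h
        exacts [h₁ b h, h₂ b h], by rw [cs.wordProd_append]⟩
    | inv g _ ihg =>
      obtain ⟨ω, h₁, rfl⟩ := ihg
      exact ⟨ω.reverse, by
        intro b hb
        exact h₁ b (List.mem_reverse.mp hb), by rw [cs.wordProd_reverse]⟩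
  · rintro ⟨ω, hω, rfl⟩
    induction ω with
    | nil => rw [cs.wordProd_nil]; exact one_mem _
    | cons i ω ih =>
      rw [cs.wordProd_cons]
      refine mul_mem ?_ (ih fun b hb => hω b (List.mem_cons_of_mem i hb))
      exact Subgroup.subset_closure ⟨i, hω i List.mem_cons_self, rfl⟩

theorem exists_reduced_word_parabolic {I : Set B} {a : W} (h : a ∈ parabolic cs I) :
    ∃ ω : List B, (∀ b ∈ ω, b ∈ I) ∧ cs.IsReduced ω ∧ a = π ω := by
  obtain ⟨ω, hω, rfl⟩ := (mem_parabolic_iff cs).mp h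
  obtain ⟨κ, hsub, hred, hπ⟩ := exists_reduced_sublist cs ω.length ω le_rfl
  exact ⟨κ, fun b hb => hω b (hsub.subset hb), hred, hπ.symm⟩

theorem simple_mem_parabolic {I : Set B} {i : B} (hi : i ∈ I) :
    σ i ∈ parabolic cs I :=
  Subgroup.subset_closure ⟨i, hi, rfl⟩

theorem parabolic_mono {I K : Set B} (h : I ⊆ K) : parabolic cs I ≤ parabolic cs K :=
  Subgroup.closure_mono (Set.image_mono h)

theorem peel_left {I : Set B} {a : W} (h : a ∈ parabolic cs I) (hne : a ≠ 1) :
    ∃ i ∈ I, ∃ a', a' ∈ parabolic cs I ∧ a = σ i * a' ∧ ℓ a = ℓ a' + 1 := by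
  obtain ⟨ω, hω, hred, rfl⟩ := exists_reduced_word_parabolic cs h
  rcases ω with _ | ⟨i, rest⟩
  · exact absurd (cs.wordProd_nil) hne
  · refine ⟨i, hω i List.mem_cons_self, π rest, ?_, cs.wordProd_cons i rest, ?_⟩
    · rw [mem_parabolic_iff]
      exact ⟨rest, fun b hb => hω b (List.mem_cons_of_mem i hb), rfl⟩
    · have h1 : cs.IsReduced rest := by
        have := hred.drop 1
        simpa using this
      rw [CoxeterSystem.IsReduced] at hred h1
      rw [hred, h1]
      simp

theorem peel_right {I : Set B} {a : W} (h : a ∈ parabolic cs I) (hne : a ≠ 1) :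
    ∃ i ∈ I, ∃ a', a' ∈ parabolic cs I ∧ a = a' * σ i ∧ ℓ a = ℓ a' + 1 := by
  obtain ⟨ω, hω, hred, rfl⟩ := exists_reduced_word_parabolic cs h
  rcases List.eq_nil_or_concat ω with rfl | ⟨ω₀, i, rfl⟩
  · exact absurd (cs.wordProd_nil) hne
  · rw [List.concat_eq_append] at hω hred ⊢
    refine ⟨i, hω i (by simp), π ω₀, ?_, ?_, ?_⟩
    · rw [mem_parabolic_iff]
      exact ⟨ω₀, fun b hb => hω b (by simp [hb]), rfl⟩
    · rw [cs.wordProd_append, cs.wordProd_singleton]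
    · have h1 : cs.IsReduced ω₀ := by
        have := hred.take ω₀.length
        rwa [List.take_left] at this
      rw [CoxeterSystem.IsReduced] at hred h1
      rw [hred, h1, List.length_append]
      rfl

theorem self_mem_doset {I J : Set B} (w : W) : w ∈ doset cs I J w :=
  ⟨1, one_mem _, 1, one_mem _, by simp⟩

theorem mul_mem_doset {I J : Set B} {w x a b : W} (ha : a ∈ parabolic cs I)
    (hb : b ∈ parabolic cs J) (hx : x ∈ doset cs I J w) :
    a * x * b ∈ doset cs I J w := by
  obtain ⟨a', ha', b', hb', rfl⟩ := hx
  exact ⟨a * a', mul_mem ha ha', b' * b, mul_mem hb' hb, by group⟩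

theorem doset_eq_of_mem {I J : Set B} {w x : W} (hx : x ∈ doset cs I J w) :
    doset cs I J x = doset cs I J w := by
  obtain ⟨a, ha, b, hb, rfl⟩ := hx
  ext y
  constructor
  · rintro ⟨a', ha', b', hb', rfl⟩
    exact ⟨a' * a, mul_mem ha' ha, b * b', mul_mem hb hb', by group⟩
  · rintro ⟨a', ha', b', hb', rfl⟩
    exact ⟨a' * a⁻¹, mul_mem ha' (inv_mem ha), b⁻¹ * b', mul_mem (inv_mem hb) hb', by group⟩

theorem doset_mono {I J K L : Set B} (hIK : I ⊆ K) (hJL : J ⊆ L) (w : W) :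
    doset cs I J w ⊆ doset cs K L w := by
  rintro x ⟨a, ha, b, hb, rfl⟩
  exact ⟨a, parabolic_mono cs hIK ha, b, parabolic_mono cs hJL hb, rfl⟩

/-! ### Minimal elements of double cosets -/

theorem bruhat_le_parabolic_mul {I J : Set B} {d : W}
    (hL : ∀ i ∈ I, ℓ d < ℓ (σ i * d)) (hR : ∀ j ∈ J, ℓ d < ℓ (d * σ j)) :
    ∀ b ∈ parabolic cs J, ∀ a ∈ parabolic cs I, BruhatLE cs d (a * (d * b)) := by
  have stepR : ∀ n, ∀ b ∈ parabolic cs J, ℓ b ≤ n → BruhatLE cs d (d * b) := by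
    intro n
    induction n with
    | zero =>
      intro b hb hlen
      have : b = 1 := by
        rw [← cs.length_eq_zero_iff]; omega
      subst this
      rw [mul_one]
      exact bruhat_refl cs d
    | succ n ih =>
      intro b hb hlen
      by_cases hb1 : b = 1
      · subst hb1; rw [mul_one]; exact bruhat_refl cs d
      · obtain ⟨j, hj, b', hb', rfl, hlb⟩ := peel_right cs hb hb1
        have ihb := ih b' hb' (by omega)
        by_cases hup : ℓ (d * b') < ℓ (d * b' * σ j)
        · have := bruhat_step_right cs (cs.isReflection_simple j) hup
          rw [← mul_assoc]
          exact bruhat_trans cs ihb this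
        · have hdown := length_mul_simple_lt cs hup
          have := lemma_Z2 cs ihb (hR j hj) hdown
          rw [← mul_assoc]
          exact this
  have stepL : ∀ n, ∀ a ∈ parabolic cs I, ∀ y : W, ℓ a ≤ n → BruhatLE cs d y →
      BruhatLE cs d (a * y) := by
    intro n
    induction n with
    | zero =>
      intro a ha y hlen hy
      have : a = 1 := by
        rw [← cs.length_eq_zero_iff]; omega
      subst this
      rwa [one_mul]
    | succ n ih =>
      intro a ha y hlen hy
      by_cases ha1 : a = 1
      · subst ha1; rwa [one_mul]
      · obtain ⟨i, hi, a', ha', rfl, hla⟩ := peel_left cs ha ha1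
        have ihy := ih a' ha' y (by omega) hy
        by_cases hup : ℓ (a' * y) < ℓ (σ i * (a' * y))
        · have := bruhat_step_left cs (cs.isReflection_simple i) hup
          rw [mul_assoc]
          exact bruhat_trans cs ihy this
        · have hne := cs.length_simple_mul_ne (a' * y) i
          have hdown : ℓ (σ i * (a' * y)) < ℓ (a' * y) := by omega
          have := lemma_Z2_left cs ihy (hL i hi) hdown
          rw [mul_assoc]
          exact this
  intro b hb a ha
  exact stepL (ℓ a) a ha (d * b) le_rfl (stepR (ℓ b) b hb le_rfl)

theorem isMinOf_of_no_descent {I J : Set B} {w d : W} (hd : d ∈ doset cs I J w)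
    (hL : ∀ i ∈ I, ℓ d < ℓ (σ i * d)) (hR : ∀ j ∈ J, ℓ d < ℓ (d * σ j)) :
    IsMinOf cs (doset cs I J w) d := by
  refine ⟨hd, ?_⟩
  intro x hx
  rw [← doset_eq_of_mem cs hd] at hx
  obtain ⟨a, ha, b, hb, rfl⟩ := hx
  have := bruhat_le_parabolic_mul cs hL hR b hb a ha
  rwa [← mul_assoc] at this

theorem exists_isMinOf {I J : Set B} (w : W) : ∃ d, IsMinOf cs (doset cs I J w) d := by
  classical
  have hex : ∃ n, ∃ x ∈ doset cs I J w, ℓ x = n := ⟨ℓ w, w, self_mem_doset cs w, rfl⟩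
  obtain ⟨d, hd, hdl⟩ := Nat.find_spec hex
  have hmin : ∀ x ∈ doset cs I J w, ℓ d ≤ ℓ x := by
    intro x hx
    have := Nat.find_min' hex (m := ℓ x) ⟨x, hx, rfl⟩
    omega
  refine ⟨d, isMinOf_of_no_descent cs hd ?_ ?_⟩
  · intro i hi
    have hmem : σ i * d ∈ doset cs I J w := by
      have := mul_mem_doset cs (simple_mem_parabolic cs hi) (one_mem _) hd
      simpa using this
    have h1 := hmin _ hmem
    have h2 := cs.length_simple_mul_ne d i
    omega
  · intro j hj
    have hmem : d * σ j ∈ doset cs I J w := by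
      have := mul_mem_doset cs (one_mem (parabolic cs I)) (simple_mem_parabolic cs hj) hd
      simpa using this
    have h1 := hmin _ hmem
    have h2 := cs.length_mul_simple_ne d j
    omega

theorem isMinOf_unique {p : Set W} {m₁ m₂ : W} (h₁ : IsMinOf cs p m₁)
    (h₂ : IsMinOf cs p m₂) : m₁ = m₂ := by
  have l12 := h₁.2 m₂ h₂.1
  have l21 := h₂.2 m₁ h₁.1
  exact bruhat_eq_of_length_le cs l12 (bruhat_length_le cs l21)

theorem isMinOf_doset_eq {I J : Set B} {w x m : W} (h : IsMinOf cs (doset cs I J w) m)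
    (hx : x ∈ doset cs I J w) : IsMinOf cs (doset cs I J x) m := by
  rwa [doset_eq_of_mem cs hx]

/-- Monotonicity of the minimum under the Bruhat order (Deodhar's lemma). -/
theorem isMinOf_mono {I J : Set B} : ∀ n : ℕ, ∀ x y mx my : W, ℓ y ≤ n →
    BruhatLE cs x y → IsMinOf cs (doset cs I J x) mx → IsMinOf cs (doset cs I J y) my →
    BruhatLE cs mx my := by
  intro n
  induction n with
  | zero =>
    intro x y mx my hy hxy hmx hmy
    have hy1 : y = 1 := by rw [← cs.length_eq_zero_iff]; omega
    subst hy1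
    have hx1 : x = 1 := by
      have := bruhat_length_le cs hxy
      rw [← cs.length_eq_zero_iff]; omega
    subst hx1
    rw [isMinOf_unique cs hmx hmy]
    exact bruhat_refl cs my
  | succ n ih =>
    intro x y mx my hy hxy hmx hmy
    by_cases hdesc : (∃ i ∈ I, ℓ (σ i * y) < ℓ y) ∨ (∃ j ∈ J, ℓ (y * σ j) < ℓ y)
    · rcases hdesc with ⟨i, hi, hdy⟩ | ⟨j, hj, hdy⟩
      · -- left descent
        have hsy : σ i * y ∈ doset cs I J y := by
          have := mul_mem_doset cs (simple_mem_parabolic cs hi) (one_mem (parabolic cs J))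
            (self_mem_doset cs y)
          simpa using this
        have hmy' : IsMinOf cs (doset cs I J (σ i * y)) my := isMinOf_doset_eq cs hmy hsy
        by_cases hdx : ℓ (σ i * x) < ℓ x
        · have hxy' : BruhatLE cs (σ i * x) (σ i * y) := lemma_Zp_left cs hxy hdx hdy
          have hsx : σ i * x ∈ doset cs I J x := by
            have := mul_mem_doset cs (simple_mem_parabolic cs hi) (one_mem (parabolic cs J))
              (self_mem_doset cs x)
            simpa using this
          have hmx' : IsMinOf cs (doset cs I J (σ i * x)) mx := isMinOf_doset_eq cs hmx hsx
          exact ih (σ i * x) (σ i * y) mx my (by omega) hxy' hmx' hmy'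
        · have hne := cs.length_simple_mul_ne x i
          have hxup : ℓ x < ℓ (σ i * x) := by omega
          have hxy' : BruhatLE cs x (σ i * y) := lemma_Z2_left cs hxy hxup hdy
          exact ih x (σ i * y) mx my (by omega) hxy' hmx hmy'
      · -- right descent
        have hsy : y * σ j ∈ doset cs I J y := by
          have := mul_mem_doset cs (one_mem (parabolic cs I)) (simple_mem_parabolic cs hj)
            (self_mem_doset cs y)
          simpa using this
        have hmy' : IsMinOf cs (doset cs I J (y * σ j)) my := isMinOf_doset_eq cs hmy hsy
        by_cases hdx : ℓ (x * σ j) < ℓ x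
        · have hxy' : BruhatLE cs (x * σ j) (y * σ j) := lemma_Zp cs hxy hdx hdy
          have hsx : x * σ j ∈ doset cs I J x := by
            have := mul_mem_doset cs (one_mem (parabolic cs I)) (simple_mem_parabolic cs hj)
              (self_mem_doset cs x)
            simpa using this
          have hmx' : IsMinOf cs (doset cs I J (x * σ j)) mx := isMinOf_doset_eq cs hmx hsx
          exact ih (x * σ j) (y * σ j) mx my (by omega) hxy' hmx' hmy'
        · have hne := cs.length_mul_simple_ne x j
          have hxup : ℓ x < ℓ (x * σ j) := by omega
          have hxy' : BruhatLE cs x (y * σ j) := lemma_Z2 cs hxy hxup hdy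
          exact ih x (y * σ j) mx my (by omega) hxy' hmx hmy'
    · -- y has no descents: y is the minimum of its own doset
      push_neg at hdesc
      obtain ⟨hdL, hdR⟩ := hdesc
      have hymin : IsMinOf cs (doset cs I J y) y := by
        apply isMinOf_of_no_descent cs (self_mem_doset cs y)
        · intro i hi
          have h1 := hdL i hi
          have h2 := cs.length_simple_mul_ne y i
          omega
        · intro j hj
          have h1 := hdR j hj
          have h2 := cs.length_mul_simple_ne y j
          omega
      have hy_eq : my = y := isMinOf_unique cs hmy hymin
      have h1 : BruhatLE cs mx x := hmx.2 x (self_mem_doset cs x)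
      rw [hy_eq]
      exact bruhat_trans cs h1 hxy

/-- The elementwise lifting property (claim C). -/
theorem exists_lift_of_min_le {K L : Set B} : ∀ n : ℕ, ∀ x d m : W, ℓ x ≤ n →
    IsMinOf cs (doset cs K L x) d → BruhatLE cs d m →
    ∃ z, BruhatLE cs x z ∧ z ∈ doset cs K L m := by
  intro n
  induction n with
  | zero =>
    intro x d m hx hd hdm
    have hx1 : x = 1 := by rw [← cs.length_eq_zero_iff]; omega
    subst hx1
    have hd1 : d = 1 := by
      have h1 := hd.2 1 (self_mem_doset cs 1)
      have h2 := bruhat_length_le cs h1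
      have := cs.length_one
      rw [← cs.length_eq_zero_iff]
      omega
    subst hd1
    exact ⟨m, hdm, self_mem_doset cs m⟩
  | succ n ih =>
    intro x d m hx hd hdm
    by_cases hdesc : (∃ i ∈ K, ℓ (σ i * x) < ℓ x) ∨ (∃ j ∈ L, ℓ (x * σ j) < ℓ x)
    · rcases hdesc with ⟨i, hi, hdx⟩ | ⟨j, hj, hdx⟩
      · set x' := σ i * x with hx'def
        have hsx : x' ∈ doset cs K L x := by
          have := mul_mem_doset cs (simple_mem_parabolic cs hi) (one_mem (parabolic cs L)) (self_mem_doset cs x)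
          simpa using this
        have hd' : IsMinOf cs (doset cs K L x') d := isMinOf_doset_eq cs hd hsx
        obtain ⟨z', hxz', hz'⟩ := ih x' d m (by omega) hd' hdm
        have hxx' : x = σ i * x' := by rw [hx'def, ← mul_assoc, cs.simple_mul_simple_self, one_mul]
        by_cases hup : ℓ z' < ℓ (σ i * z')
        · refine ⟨σ i * z', ?_, ?_⟩
          · rw [hxx']
            exact lemma_L_left cs hxz' hup
          · have := mul_mem_doset cs (simple_mem_parabolic cs hi) (one_mem (parabolic cs L)) hz'
            simpa using this
        · have hne := cs.length_simple_mul_ne z' i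
          have hdown : ℓ (σ i * z') < ℓ z' := by omega
          refine ⟨z', ?_, hz'⟩
          have hxs' : ℓ x' < ℓ (σ i * x') := by rw [← hxx']; omega
          have := lemma_Y_left cs hxz' hxs' hdown
          rwa [← hxx'] at this
      · set x' := x * σ j with hx'def
        have hsx : x' ∈ doset cs K L x := by
          have := mul_mem_doset cs (one_mem (parabolic cs K)) (simple_mem_parabolic cs hj) (self_mem_doset cs x)
          simpa using this
        have hd' : IsMinOf cs (doset cs K L x') d := isMinOf_doset_eq cs hd hsx
        obtain ⟨z', hxz', hz'⟩ := ih x' d m (by omega) hd' hdm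
        have hxx' : x = x' * σ j := by rw [hx'def, cs.simple_mul_simple_cancel_right]
        by_cases hup : ℓ z' < ℓ (z' * σ j)
        · refine ⟨z' * σ j, ?_, ?_⟩
          · rw [hxx']
            exact lemma_L cs hxz' hup
          · have := mul_mem_doset cs (one_mem (parabolic cs K)) (simple_mem_parabolic cs hj) hz'
            simpa using this
        · have hne := cs.length_mul_simple_ne z' j
          have hdown : ℓ (z' * σ j) < ℓ z' := by omega
          refine ⟨z', ?_, hz'⟩
          have hxs' : ℓ x' < ℓ (x' * σ j) := by rw [← hxx']; omega
          have := lemma_Y cs hxz' hxs' hdown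
          rwa [← hxx'] at this
    · push_neg at hdesc
      obtain ⟨hdL, hdR⟩ := hdesc
      have hxmin : IsMinOf cs (doset cs K L x) x := by
        apply isMinOf_of_no_descent cs (self_mem_doset cs x)
        · intro i hi
          have h1 := hdL i hi
          have h2 := cs.length_simple_mul_ne x i
          omega
        · intro j hj
          have h1 := hdR j hj
          have h2 := cs.length_mul_simple_ne x j
          omega
      have hxd : x = d := isMinOf_unique cs hxmin hd
      exact ⟨m, by rw [hxd]; exact hdm, self_mem_doset cs m⟩


end Aux

/-- The preimage under the quotient map of the set `{≤ q}` is the downward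
closure of the preimage of `q`: `π(p) ≤ q` iff there is `p'` with `π(p') = q`
and `p ≤ p'`. -/
theorem doset_quotient_preimage_downward (cs : CoxeterSystem M W) (I J K L : Set B)
    (hIK : I ⊆ K) (hJL : J ⊆ L)
    (hI : Finitary cs I) (hJ : Finitary cs J) (hK : Finitary cs K) (hL : Finitary cs L)
    (w u mp mw mu : W)
    (hmp : IsMinOf cs (doset cs I J w) mp)
    (hmw : IsMinOf cs (doset cs K L w) mw)
    (hmu : IsMinOf cs (doset cs K L u) mu) :
    BruhatLE cs mw mu ↔
      ∃ v mv, IsMinOf cs (doset cs I J v) mv ∧ doset cs K L v = doset cs K L u ∧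
        BruhatLE cs mp mv := by
  constructor
  · intro h
    have hmpKL : mp ∈ doset cs K L w := Aux.doset_mono cs hIK hJL w hmp.1
    have hmwmp : IsMinOf cs (doset cs K L mp) mw := Aux.isMinOf_doset_eq cs hmw hmpKL
    obtain ⟨z, hpz, hzmem⟩ :=
      Aux.exists_lift_of_min_le cs (cs.length mp) mp mw mu le_rfl hmwmp h
    have hzu : doset cs K L z = doset cs K L u := by
      rw [Aux.doset_eq_of_mem cs hzmem]
      exact Aux.doset_eq_of_mem cs hmu.1
    obtain ⟨mv, hmv⟩ := Aux.exists_isMinOf cs (I := I) (J := J) z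
    refine ⟨z, mv, hmv, hzu, ?_⟩
    have hmpmin : IsMinOf cs (doset cs I J mp) mp := Aux.isMinOf_doset_eq cs hmp hmp.1
    exact Aux.isMinOf_mono cs (cs.length z) mp z mp mv le_rfl hpz hmpmin hmv
  · rintro ⟨v, mv, hmv, hvu, hpmv⟩
    have h1 : BruhatLE cs mw mp := hmw.2 mp (Aux.doset_mono cs hIK hJL w hmp.1)
    have h2 : BruhatLE cs mw mv := Aux.bruhat_trans cs h1 hpmv
    have hmwmin : IsMinOf cs (doset cs K L mw) mw := Aux.isMinOf_doset_eq cs hmw hmw.1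
    have hmvKL : mv ∈ doset cs K L u := by
      rw [← hvu]
      exact Aux.doset_mono cs hIK hJL v hmv.1
    have hmumin : IsMinOf cs (doset cs K L mv) mu := Aux.isMinOf_doset_eq cs hmu hmvKL
    exact Aux.isMinOf_mono cs (cs.length mv) mw mv mw mu le_rfl h2 hmwmin hmumin

end CoxeterPaper
end

section
/- Let (W,S) be a Coxeter system. If q' ≤ q are (I,J)-cosets, p is a (K,I)-coset, and r is a (J,L)-coset, then p * q' * r ≤ p * q * r in the Bruhat order on (K,L)-cosets. -/
namespace CoxeterPaper

open CoxeterSystem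

variable {B : Type*} {W : Type*} [Group W] {M : CoxeterMatrix B}

open List

variable (cs : CoxeterSystem M W)

local prefix:100 "s" => cs.simple
local prefix:100 "π" => cs.wordProd
local prefix:100 "ℓ" => cs.length

/-! ### Right inversion sequences of concatenations and alternating words -/

theorem ris_append (ω₁ ω₂ : List B) :
    cs.rightInvSeq (ω₁ ++ ω₂) =
      (cs.rightInvSeq ω₁).map (fun r => (π ω₂)⁻¹ * r * (π ω₂)) ++ cs.rightInvSeq ω₂ := by
  induction ω₁ with
  | nil => simp [rightInvSeq]
  | cons i ω₁ ih =>
    simp only [cons_append, rightInvSeq, ih, map_cons, List.append_eq, wordProd_append,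
      mul_inv_rev]
    congr 1
    group

theorem alt_split (i i' : B) (m k : ℕ) :
    alternatingWord i i' (m + k) =
      (if Even m then alternatingWord i i' k else alternatingWord i' i k)
        ++ alternatingWord i i' m := by
  induction k with
  | zero => simp [alternatingWord]
  | succ k ih =>
    rw [show m + (k+1) = (m+k) + 1 by ring, alternatingWord_succ', ih]
    rcases Nat.even_or_odd m with hm | hm
    · simp only [hm, if_pos, Nat.even_add, iff_true_intro hm]
      rw [alternatingWord_succ' i i' k]
      simp [Nat.even_add, hm]
    · have hm' : ¬ Even m := Nat.not_even_iff_odd.2 hm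
      simp only [hm', if_false, if_neg]
      rw [alternatingWord_succ' i' i k]
      have : Even (m + k) ↔ ¬ Even k := by
        rw [Nat.even_add]
        simp [hm']
      by_cases hk : Even k <;> simp [this, hk]

theorem alt_drop (i i' : B) (m k : ℕ) :
    (alternatingWord i i' m).drop k = alternatingWord i i' (m - k) := by
  induction m generalizing i i' k with
  | zero => simp [alternatingWord]
  | succ m ih =>
    cases k with
    | zero => simp
    | succ k =>
      rw [alternatingWord_succ', drop_succ_cons, ih, Nat.succ_sub_succ]


theorem alt_getElem? (i i' : B) (m k : ℕ) (hk : k < m) :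
    (alternatingWord i i' m)[k]? = some (if Even (m - k - 1) then i' else i) := by
  have h1 : (alternatingWord i i' m)[k]? = ((alternatingWord i i' m).drop k)[0]? := by
    rw [List.getElem?_drop, Nat.add_zero]
  rw [h1, alt_drop]
  have h2 : m - k = (m - k - 1) + 1 := by omega
  rw [h2, alternatingWord_succ']
  simp

/-- The entries of the right inversion sequence of an alternating word. -/
theorem ris_alt_getD (i i' : B) (m k : ℕ) (hk : k < m) :
    (cs.rightInvSeq (alternatingWord i i' m)).getD k 1 =
      (π (alternatingWord i i' (m - k - 1)))⁻¹
        * s (if Even (m - k - 1) then i' else i)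
        * π (alternatingWord i i' (m - k - 1)) := by
  rw [getD_rightInvSeq, alt_drop]
  have h2 : m - (k + 1) = m - k - 1 := by omega
  rw [h2]
  congr 2
  rw [alt_getElem? i i' m k hk]
  rfl

/-! ### Dihedral computations -/

theorem comm_pow_aux {G : Type*} [Group G] {x p : G} (h : x * p = p⁻¹ * x) (k : ℕ) :
    x * p ^ k = (p ^ k)⁻¹ * x := by
  induction k with
  | zero => simp
  | succ k ih =>
    rw [pow_succ, ← mul_assoc, ih, mul_assoc, h, ← mul_assoc, mul_inv_rev, ← inv_pow,
      ← pow_succ, ← pow_succ']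

theorem comm_pow_aux' {G : Type*} [Group G] {x p : G} (h : x * p = p⁻¹ * x) (k : ℕ) :
    x * (p ^ k)⁻¹ = p ^ k * x := by
  have h' : x * p⁻¹ = p * x := by
    rw [mul_inv_eq_iff_eq_mul, mul_assoc, h, ← mul_assoc]
    simp
  have := comm_pow_aux (p := p⁻¹) (by rwa [inv_inv]) k
  rwa [inv_pow, inv_inv] at this

section Dihedral

variable (i i' : B)

local notation "a" => cs.simple i
local notation "b" => cs.simple i'
local notation "p" => cs.simple i * cs.simple i'

theorem hba : b * (a * b) = (a * b)⁻¹ * b := by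
  rw [mul_inv_rev, cs.inv_simple, cs.inv_simple]
  group

theorem hab : a * (a * b) = (a * b)⁻¹ * a := by
  rw [mul_inv_rev, cs.inv_simple, cs.inv_simple, ← mul_assoc, cs.simple_mul_simple_self,
    one_mul, mul_assoc, cs.simple_mul_simple_self, mul_one]

theorem b_mul_p_pow (k : ℕ) : b * p ^ k = (p ^ k)⁻¹ * b :=
  comm_pow_aux (hba cs i i') k

theorem a_mul_p_pow (k : ℕ) : a * p ^ k = (p ^ k)⁻¹ * a :=
  comm_pow_aux (hab cs i i') k

/-- Closed form for the conjugated-simple entries of alternating inversion sequences. -/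
theorem alt_entry_eq (L : ℕ) :
    (π (alternatingWord i i' L))⁻¹ * s (if Even L then i' else i) * π (alternatingWord i i' L)
      = (p ^ L)⁻¹ * b := by
  rcases Nat.even_or_odd L with hL | hL
  · obtain ⟨k, hk⟩ := hL
    have hL2 : L / 2 = k := by omega
    rw [if_pos ⟨k, hk⟩, cs.prod_alternatingWord_eq_mul_pow, if_pos ⟨k, hk⟩, hL2, one_mul,
      mul_assoc, b_mul_p_pow, show L = k + k from hk, pow_add, mul_inv_rev, mul_assoc]
  · have hL' : ¬ Even L := Nat.not_even_iff_odd.2 hL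
    obtain ⟨k, hk⟩ := hL
    have hL2 : L / 2 = k := by omega
    rw [if_neg hL', cs.prod_alternatingWord_eq_mul_pow, if_neg hL', hL2, mul_inv_rev,
      cs.inv_simple]
    have hbab : b * a * b = (a * b)⁻¹ * b := by
      rw [mul_assoc, hba cs i i']
    calc (p ^ k)⁻¹ * b * a * (b * p ^ k)
        = (p ^ k)⁻¹ * (b * a * b) * p ^ k := by
          simp only [mul_assoc]
      _ = (p ^ k)⁻¹ * ((a * b)⁻¹ * (b * p ^ k)) := by rw [hbab]; simp only [mul_assoc]
      _ = (p ^ k)⁻¹ * ((a * b)⁻¹ * ((p ^ k)⁻¹ * b)) := by rw [b_mul_p_pow]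
      _ = ((p ^ k) * (a * b) * (p ^ k))⁻¹ * b := by
          simp only [mul_inv_rev, mul_assoc]
      _ = (p ^ L)⁻¹ * b := by
          rw [show L = k + 1 + k by omega, pow_add, pow_add, pow_one]

end Dihedral


section Braid

variable (i i' : B)

local notation "b" => cs.simple i'
local notation "p" => cs.simple i * cs.simple i'

theorem p_pow_rel : p ^ (M.M i i') = 1 := cs.simple_mul_simple_pow i i'

theorem p_pow_cancel (L : ℕ) : p ^ (L + M.M i i') = p ^ L := by
  rw [pow_add, p_pow_rel, mul_one]

/-- The second half of the doubled braid word absorbs the first half of the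
right inversion sequence, entrywise. -/
theorem braid_ris_half :
    ((cs.rightInvSeq (if Even (M.M i i') then alternatingWord i i' (M.M i i')
        else alternatingWord i' i (M.M i i'))).map
      (fun r => (π (alternatingWord i i' (M.M i i')))⁻¹ * r * π (alternatingWord i i' (M.M i i'))))
      = cs.rightInvSeq (alternatingWord i i' (M.M i i')) := by
  set m := M.M i i' with hm
  rcases Nat.even_or_odd m with hme | hmo
  · obtain ⟨r, hr⟩ := hme
    rw [if_pos ⟨r, hr⟩]
    apply List.ext_getElem
    · simp
    intro k h1 h2
    have hkm : k < m := by simpa using h2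
    have hl : k < (cs.rightInvSeq (alternatingWord i i' m)).length := by simpa using hkm
    rw [List.getElem_map]
    rw [← List.getD_eq_getElem _ 1 hl]
    rw [ris_alt_getD cs i i' m k hkm, alt_entry_eq]
    set L := m - k - 1
    rw [cs.prod_alternatingWord_eq_mul_pow, if_pos ⟨r, hr⟩, one_mul]
    have hr2 : m / 2 = r := by omega
    rw [hr2]
    calc (p ^ r)⁻¹ * ((p ^ L)⁻¹ * b) * p ^ r
        = (p ^ r)⁻¹ * (p ^ L)⁻¹ * (b * p ^ r) := by simp only [mul_assoc]
      _ = (p ^ r)⁻¹ * (p ^ L)⁻¹ * ((p ^ r)⁻¹ * b) := by rw [b_mul_p_pow]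
      _ = (p ^ r * p ^ L * p ^ r)⁻¹ * b := by simp only [mul_inv_rev, mul_assoc]
      _ = (p ^ (L + m))⁻¹ * b := by
          rw [← pow_add, ← pow_add, show r + L + r = L + m by omega]
      _ = (p ^ L)⁻¹ * b := by rw [p_pow_cancel]
  · have hme : ¬ Even m := Nat.not_even_iff_odd.2 hmo
    obtain ⟨j, hj⟩ := hmo
    rw [if_neg hme]
    apply List.ext_getElem
    · simp
    intro k h1 h2
    have hkm : k < m := by simpa using h2
    have hl : k < (cs.rightInvSeq (alternatingWord i' i m)).length := by simpa using hkm
    have hl2 : k < (cs.rightInvSeq (alternatingWord i i' m)).length := by simpa using hkm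
    rw [List.getElem_map]
    rw [← List.getD_eq_getElem _ 1 hl, ← List.getD_eq_getElem _ 1 hl2]
    rw [ris_alt_getD cs i' i m k hkm, ris_alt_getD cs i i' m k hkm, alt_entry_eq, alt_entry_eq]
    set L := m - k - 1
    -- rewrite the (s i' * s i) powers into p powers
    have hq : ((cs.simple i' * cs.simple i) ^ L)⁻¹ = p ^ L := by
      rw [← inv_pow, mul_inv_rev, cs.inv_simple, cs.inv_simple]
    rw [hq]
    rw [cs.prod_alternatingWord_eq_mul_pow, if_neg hme]
    have hj2 : m / 2 = j := by omega
    rw [hj2, mul_inv_rev, cs.inv_simple]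
    calc (p ^ j)⁻¹ * b * (p ^ L * cs.simple i) * (b * p ^ j)
        = (p ^ j)⁻¹ * (b * p ^ L) * (cs.simple i * b * p ^ j) := by simp only [mul_assoc]
      _ = (p ^ j)⁻¹ * ((p ^ L)⁻¹ * b) * (p ^ (j+1)) := by
          rw [b_mul_p_pow, pow_succ']
          try simp only [mul_assoc]
      _ = (p ^ j)⁻¹ * (p ^ L)⁻¹ * (b * p ^ (j+1)) := by simp only [mul_assoc]
      _ = (p ^ j)⁻¹ * (p ^ L)⁻¹ * ((p ^ (j+1))⁻¹ * b) := by rw [b_mul_p_pow]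
      _ = (p ^ (j+1) * p ^ L * p ^ j)⁻¹ * b := by simp only [mul_inv_rev, mul_assoc]
      _ = (p ^ (L + m))⁻¹ * b := by
          rw [← pow_add, ← pow_add, show j + 1 + L + j = L + m by omega]
      _ = (p ^ L)⁻¹ * b := by rw [p_pow_cancel]

theorem braid_ris_doubled :
    cs.rightInvSeq (alternatingWord i i' (2 * M.M i i')) =
      cs.rightInvSeq (alternatingWord i i' (M.M i i'))
        ++ cs.rightInvSeq (alternatingWord i i' (M.M i i')) := by
  have h0 : alternatingWord i i' (2 * M.M i i') =
      (if Even (M.M i i') then alternatingWord i i' (M.M i i')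
        else alternatingWord i' i (M.M i i')) ++ alternatingWord i i' (M.M i i') := by
    rw [show 2 * M.M i i' = M.M i i' + M.M i i' by ring, alt_split]
  rw [h0, ris_append, braid_ris_half]

theorem braid_count_even [DecidableEq W] (t : W) :
    Even ((cs.rightInvSeq (alternatingWord i i' (2 * M.M i i'))).count t) := by
  rw [braid_ris_doubled, List.count_append]
  exact ⟨_, rfl⟩

theorem braid_prod_eq_one : π (alternatingWord i i' (2 * M.M i i')) = 1 := by
  rw [cs.prod_alternatingWord_eq_mul_pow, if_pos (even_two_mul _), one_mul,
    show 2 * M.M i i' / 2 = M.M i i' by omega, p_pow_rel]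

end Braid


/-! ### The sign representation on reflections, and strong exchange -/

theorem lis_eq_map_ris (ω : List B) :
    cs.leftInvSeq ω = (cs.rightInvSeq ω).map (fun r => π ω * r * (π ω)⁻¹) := by
  induction ω with
  | nil => simp [leftInvSeq, rightInvSeq]
  | cons i ω ih =>
    show cs.leftInvSeq (i :: ω) = _
    rw [leftInvSeq, ih]
    show _ = ((((π ω)⁻¹ * s i * π ω) :: cs.rightInvSeq ω).map
      (fun r => π (i :: ω) * r * (π (i :: ω))⁻¹))
    rw [List.map_cons, List.map_map]
    congr 1
    · rw [cs.wordProd_cons, mul_inv_rev, cs.inv_simple]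
      simp only [mul_assoc, mul_inv_cancel_left, inv_mul_cancel_left,
        cs.simple_mul_simple_cancel_left]
    · apply List.map_congr_left
      intro r _
      simp only [Function.comp_apply, MulAut.conj_apply, cs.wordProd_cons, mul_inv_rev,
        cs.inv_simple, mul_assoc]

section SignRep

variable [DecidableEq W]

/-- The involution of `W × ℤˣ` attached to a simple reflection. -/
def braidPermFun (i : B) : W × ℤˣ → W × ℤˣ :=
  fun x => (s i * x.1 * s i, if x.1 = s i then -x.2 else x.2)

theorem braidPermFun_invol (i : B) (x : W × ℤˣ) :
    braidPermFun cs i (braidPermFun cs i x) = x := by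
  obtain ⟨t, ε⟩ := x
  simp only [braidPermFun]
  have h1 : s i * (s i * t * s i) * s i = t := by
    simp only [mul_assoc]
    rw [cs.simple_mul_simple_self]
    rw [mul_one, ← mul_assoc, cs.simple_mul_simple_self, one_mul]
  have h2 : (s i * t * s i = s i) ↔ (t = s i) := by
    constructor
    · intro h
      have := congrArg (fun z => s i * z * s i) h
      simpa [h1] using this
    · intro h
      rw [h, cs.simple_mul_simple_self, one_mul]
  rw [h1]
  by_cases h : t = s i
  · simp [h2, h]
  · simp [h2, h]

/-- The permutation of `W × ℤˣ` attached to a simple reflection. -/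
def braidPerm (i : B) : Equiv.Perm (W × ℤˣ) where
  toFun := braidPermFun cs i
  invFun := braidPermFun cs i
  left_inv := braidPermFun_invol cs i
  right_inv := braidPermFun_invol cs i

theorem fwordPerm_apply (ω : List B) (t : W) (ε : ℤˣ) :
    ((ω.map (braidPerm cs)).prod) (t, ε) =
      (π ω * t * (π ω)⁻¹, (-1) ^ ((cs.rightInvSeq ω).count t) * ε) := by
  induction ω with
  | nil => simp [rightInvSeq]
  | cons i ω ih =>
    rw [List.map_cons, List.prod_cons, Equiv.Perm.mul_apply, ih]
    show braidPermFun cs i _ = _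
    rw [braidPermFun]
    simp only [Prod.mk.injEq]
    have hcond : (π ω * t * (π ω)⁻¹ = s i) ↔ (t = (π ω)⁻¹ * s i * π ω) := by
      constructor
      · intro h
        rw [← h]
        group
      · intro h
        rw [h]
        group
    constructor
    · rw [cs.wordProd_cons, mul_inv_rev, cs.inv_simple]
      simp only [mul_assoc]
    · show (if π ω * t * (π ω)⁻¹ = s i then -((-1) ^ ((cs.rightInvSeq ω).count t) * ε)
          else (-1) ^ ((cs.rightInvSeq ω).count t) * ε)
        = (-1) ^ ((((π ω)⁻¹ * s i * π ω) :: cs.rightInvSeq ω).count t) * ε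
      rw [List.count_cons]
      by_cases h : t = (π ω)⁻¹ * s i * π ω
      · rw [if_pos (hcond.2 h)]
        have hbeq : (((π ω)⁻¹ * s i * π ω) == t) = true := beq_iff_eq.2 h.symm
        rw [hbeq, if_pos rfl, pow_add, pow_one, mul_neg_one, neg_mul]
      · rw [if_neg (fun hc => h (hcond.1 hc))]
        have hbeq : ¬ ((((π ω)⁻¹ * s i * π ω) == t) = true) := by
          simp only [beq_iff_eq]
          exact fun hc => h hc.symm
        rw [if_neg hbeq, Nat.add_zero]

theorem braidPerm_liftable : M.IsLiftable (braidPerm cs) := by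
  intro i i'
  have key : ∀ m : ℕ, (braidPerm cs i * braidPerm cs i') ^ m =
      ((alternatingWord i i' (2 * m)).map (braidPerm cs)).prod := by
    intro m
    induction m with
    | zero => simp [alternatingWord]
    | succ m ih =>
      have h2 : alternatingWord i i' (2 * (m + 1)) = i :: i' :: alternatingWord i i' (2 * m) := by
        rw [show 2 * (m + 1) = (2 * m + 1) + 1 by ring, alternatingWord_succ',
          alternatingWord_succ']
        have h3 : ¬ Even (2 * m + 1) := by simp [Nat.even_add_one, parity_simps]
        rw [if_neg h3, if_pos (even_two_mul m)]
      rw [h2, List.map_cons, List.map_cons, List.prod_cons, List.prod_cons, ← ih, pow_succ']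
      rw [mul_assoc]
  rw [key]
  apply Equiv.ext
  rintro ⟨t, ε⟩
  rw [fwordPerm_apply, braid_prod_eq_one]
  have he : Even ((cs.rightInvSeq (alternatingWord i i' (2 * M.M i i'))).count t) :=
    braid_count_even cs i i' t
  rw [he.neg_one_pow]
  simp

/-- The homomorphism from `W` to permutations of `W × ℤˣ` tracking inversion parity. -/
def nReflHom : W →* Equiv.Perm (W × ℤˣ) :=
  cs.lift ⟨braidPerm cs, braidPerm_liftable cs⟩

theorem nReflHom_wordProd (ω : List B) :
    nReflHom cs (π ω) = (ω.map (braidPerm cs)).prod := by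
  induction ω with
  | nil => simp [nReflHom]
  | cons i ω ih =>
    rw [cs.wordProd_cons, map_mul, ih, List.map_cons, List.prod_cons]
    congr 1
    exact cs.lift_apply_simple (braidPerm_liftable cs) i

theorem sign_eq_of_prod_eq {ω ω' : List B} (h : π ω = π ω') (t : W) :
    ((-1 : ℤˣ)) ^ ((cs.rightInvSeq ω).count t) = (-1) ^ ((cs.rightInvSeq ω').count t) := by
  have h1 := nReflHom_wordProd cs ω
  have h2 := nReflHom_wordProd cs ω'
  rw [h] at h1
  have h3 : ((ω.map (braidPerm cs)).prod) (t, 1) = ((ω'.map (braidPerm cs)).prod) (t, 1) := by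
    rw [← h1, ← h2]
  rw [fwordPerm_apply, fwordPerm_apply, h] at h3
  have := congrArg Prod.snd h3
  simpa using this

theorem odd_count_refl_word {t : W} (ht : cs.IsReflection t) :
    ∃ ω : List B, π ω = t ∧ Odd ((cs.rightInvSeq ω).count t) := by
  obtain ⟨w, c, rfl⟩ := ht
  obtain ⟨χ, rfl⟩ := cs.wordProd_surjective w
  set t := π χ * s c * (π χ)⁻¹ with hts
  refine ⟨χ ++ ([c] ++ χ.reverse), ?_, ?_⟩
  · rw [cs.wordProd_append, cs.wordProd_append, cs.wordProd_singleton, cs.wordProd_reverse,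
      hts, mul_assoc]
  · rw [ris_append, ris_append, List.count_append, List.count_append]
    have hg : π ([c] ++ χ.reverse) = s c * (π χ)⁻¹ := by
      rw [cs.wordProd_append, cs.wordProd_singleton, cs.wordProd_reverse]
    -- the singleton part contributes exactly one `t`
    have h1 : ((cs.rightInvSeq [c]).map
        (fun r => (π χ.reverse)⁻¹ * r * π χ.reverse)).count t = 1 := by
      rw [cs.rightInvSeq_singleton]
      simp only [List.map_cons, List.map_nil]
      rw [cs.wordProd_reverse, inv_inv, ← hts]
      simp
    -- the first part contributes `count (s c) (ris χ)`
    have hinj : Function.Injective (fun r : W => (π ([c] ++ χ.reverse))⁻¹ * r * π ([c] ++ χ.reverse)) := by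
      intro u v huv
      simpa using huv
    have h2 : ((cs.rightInvSeq χ).map
        (fun r => (π ([c] ++ χ.reverse))⁻¹ * r * π ([c] ++ χ.reverse))).count t
        = (cs.rightInvSeq χ).count (s c) := by
      have ht2 : t = (fun r : W => (π ([c] ++ χ.reverse))⁻¹ * r * π ([c] ++ χ.reverse)) (s c) := by
        simp only [hg, hts, mul_inv_rev, cs.inv_simple, inv_inv, mul_assoc,
          cs.simple_mul_simple_cancel_left]
      rw [ht2, List.count_map_of_injective _ _ hinj]
    -- the reversed part contributes `count (s c) (ris χ)` as well
    have h3 : (cs.rightInvSeq χ.reverse).count t = (cs.rightInvSeq χ).count (s c) := by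
      rw [cs.rightInvSeq_reverse, List.count_reverse, lis_eq_map_ris cs]
      have ht3 : t = (fun r : W => π χ * r * (π χ)⁻¹) (s c) := rfl
      have hinj3 : Function.Injective (fun r : W => π χ * r * (π χ)⁻¹) := by
        intro u v huv
        simpa using huv
      rw [ht3, List.count_map_of_injective _ _ hinj3]
    rw [h1, h2, h3]
    exact ⟨(cs.rightInvSeq χ).count (s c), by ring⟩

end SignRep

/-- **Strong exchange**. -/
theorem strong_exchange {ω : List B} (hω : cs.IsReduced ω) {t : W} (ht : cs.IsReflection t)
    (hlt : ℓ (π ω * t) < ℓ (π ω)) : t ∈ cs.rightInvSeq ω := by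
  letI : DecidableEq W := Classical.decEq W
  by_contra hnot
  have hc0 : (cs.rightInvSeq ω).count t = 0 := List.count_eq_zero.2 hnot
  obtain ⟨ω₁, hω₁red, hω₁⟩ := cs.exists_reduced_word' (π ω * t)
  obtain ⟨ωt, hωt, hodd⟩ := odd_count_refl_word cs ht
  have hprod : π ω = π (ω₁ ++ ωt) := by
    rw [cs.wordProd_append, ← hω₁, hωt, mul_assoc, ht.mul_self, mul_one]
  have hsign := sign_eq_of_prod_eq cs hprod t
  rw [hc0, pow_zero] at hsign
  have hcnt : (cs.rightInvSeq (ω₁ ++ ωt)).count t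
      = (cs.rightInvSeq ω₁).count t + (cs.rightInvSeq ωt).count t := by
    rw [ris_append, List.count_append]
    congr 1
    have ht4 : t = (fun r : W => (π ωt)⁻¹ * r * π ωt) t := by
      show t = (π ωt)⁻¹ * t * π ωt
      rw [hωt, ht.inv, ht.mul_self, one_mul]
    have hinj4 : Function.Injective (fun r : W => (π ωt)⁻¹ * r * π ωt) := by
      intro u v huv
      simpa using huv
    nth_rw 1 [ht4]
    exact List.count_map_of_injective _ _ hinj4 t
  -- parity forces `t ∈ ris ω₁`
  have hodd1 : Odd ((cs.rightInvSeq ω₁).count t) := by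
    by_contra heven
    rw [Nat.not_odd_iff_even] at heven
    have : Odd ((cs.rightInvSeq (ω₁ ++ ωt)).count t) := by
      rw [hcnt]
      exact heven.add_odd hodd
    rw [this.neg_one_pow] at hsign
    exact (by decide : ((1 : ℤˣ)) ≠ -1) hsign
  have hmem : t ∈ cs.rightInvSeq ω₁ := by
    apply List.count_pos_iff.1
    obtain ⟨k, hk⟩ := hodd1
    omega
  obtain ⟨j, hj, hjt⟩ := List.getElem_of_mem hmem
  have herase : π ω₁ * t = π (ω₁.eraseIdx j) := by
    rw [← hjt, ← List.getD_eq_getElem _ 1 hj]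
    exact cs.wordProd_mul_getD_rightInvSeq ω₁ j
  have hlen : ℓ (π (ω₁.eraseIdx j)) ≤ ω₁.length - 1 := by
    have h5 := cs.length_wordProd_le (ω₁.eraseIdx j)
    have hj' : j < ω₁.length := by simpa using hj
    have h6 : (ω₁.eraseIdx j).length = ω₁.length - 1 := by
      rw [List.length_eraseIdx]
      simp [hj']
    omega
  have hback : π ω₁ * t = π ω := by
    rw [← hω₁, mul_assoc, ht.mul_self, mul_one]
  rw [hback] at herase
  have hl1 : ω₁.length = ℓ (π ω * t) := by rw [hω₁]; exact hω₁red.symm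
  have hfin := congrArg cs.length herase
  omega


/-! ### The Bruhat order: basic properties -/

theorem bruhat_refl (x : W) : BruhatLE cs x x := Relation.ReflTransGen.refl

theorem bruhat_trans {x y z : W} (h1 : BruhatLE cs x y) (h2 : BruhatLE cs y z) :
    BruhatLE cs x z := Relation.ReflTransGen.trans h1 h2

theorem bruhat_length_le {x y : W} (h : BruhatLE cs x y) : ℓ x ≤ ℓ y := by
  induction h with
  | refl => exact le_refl _
  | tail _ hbc ih => exact ih.trans (le_of_lt hbc.2)

theorem bruhat_step {x t : W} (ht : cs.IsReflection t) (h : ℓ x < ℓ (x * t)) :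
    BruhatLE cs x (x * t) :=
  Relation.ReflTransGen.single ⟨⟨t, ht, rfl⟩, h⟩

theorem bruhat_simple_up {x : W} {i : B} (h : ℓ x < ℓ (x * s i)) :
    BruhatLE cs x (x * s i) :=
  bruhat_step cs (cs.isReflection_simple i) h

theorem bruhat_simple_down {x : W} {i : B} (h : ℓ (x * s i) < ℓ x) :
    BruhatLE cs (x * s i) x := by
  have := bruhat_step cs (cs.isReflection_simple i)
    (x := x * s i) (by rwa [cs.simple_mul_simple_cancel_right])
  rwa [cs.simple_mul_simple_cancel_right] at this

theorem bruhat_inv {x y : W} (h : BruhatLE cs x y) : BruhatLE cs x⁻¹ y⁻¹ := by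
  induction h with
  | refl => exact bruhat_refl cs _
  | tail _ hbc ih =>
    obtain ⟨⟨t, ht, rfl⟩, hlen⟩ := hbc
    rename_i b _
    refine bruhat_trans cs ih (Relation.ReflTransGen.single ⟨⟨b * t * b⁻¹, ht.conj b, ?_⟩, ?_⟩)
    · rw [mul_inv_rev, ht.inv]
      group
    · rw [cs.length_inv, cs.length_inv]
      exact hlen

/-- Every word has a reduced sublist with the same product. -/
theorem exists_reduced_sublist_aux : ∀ (n : ℕ) (ω : List B), ω.length ≤ n →
    ∃ σ, σ.Sublist ω ∧ cs.IsReduced σ ∧ π σ = π ω := by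
  intro n
  induction n with
  | zero =>
    intro ω hlen
    have hω : ω = [] := List.length_eq_zero_iff.mp (Nat.le_zero.mp hlen)
    exact ⟨[], by simp [hω], by simp [CoxeterSystem.IsReduced], by simp [hω]⟩
  | succ n ih =>
    intro ω hlen
    by_cases hred : cs.IsReduced ω
    · exact ⟨ω, List.Sublist.refl ω, hred, rfl⟩
    have hne : ω ≠ [] := by
      intro h
      exact hred (by simp [h, CoxeterSystem.IsReduced])
    have hpos : 0 < ω.length := List.length_pos_iff.mpr hne
    haveI : DecidablePred (fun k => ¬ cs.IsReduced (ω.take (k + 1))) :=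
      fun _ => Classical.dec _
    have hex : ∃ k, ¬ cs.IsReduced (ω.take (k + 1)) := by
      refine ⟨ω.length - 1, ?_⟩
      rwa [show ω.length - 1 + 1 = ω.length by omega, List.take_length]
    set k := Nat.find hex with hkdef
    have hkspec : ¬ cs.IsReduced (ω.take (k + 1)) := Nat.find_spec hex
    have hkmin : ∀ m, m < k → cs.IsReduced (ω.take (m + 1)) := by
      intro m hm
      have := Nat.find_min hex hm
      simpa using this
    have hktake : cs.IsReduced (ω.take k) := by
      cases hk : k with
      | zero => simp [CoxeterSystem.IsReduced]
      | succ m =>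
        exact hkmin m (by omega)
    have hklt : k < ω.length := by
      by_contra hge
      push_neg at hge
      have h1 : ω.length - 1 < k := by omega
      have := hkmin (ω.length - 1) h1
      rw [show ω.length - 1 + 1 = ω.length by omega, List.take_length] at this
      exact hred this
    have htake : ω.take (k+1) = ω.take k ++ [ω[k]] := by
      rw [List.take_succ, List.getElem?_eq_getElem hklt]
      rfl
    have hlentake : (ω.take k).length = k := by
      rw [List.length_take]
      omega
    have hlenk : ℓ (π (ω.take k)) = k := by
      rw [hktake, hlentake]
    have hdesc : ℓ (π (ω.take k) * s (ω[k])) < ℓ (π (ω.take k)) := by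
      rcases cs.length_mul_simple (π (ω.take k)) (ω[k]) with hup | hdn
      · exfalso
        apply hkspec
        show ℓ (π (ω.take (k+1))) = (ω.take (k+1)).length
        rw [htake, cs.wordProd_append, cs.wordProd_singleton, hup, hlenk]
        simp
        omega
      · omega
    have hmem : s (ω[k]) ∈ cs.rightInvSeq (ω.take k) :=
      strong_exchange cs hktake (cs.isReflection_simple _) hdesc
    obtain ⟨j, hj, hjt⟩ := List.getElem_of_mem hmem
    have hjk : j < k := by
      have := hj
      rwa [length_rightInvSeq, hlentake] at this
    have herase : π (ω.take k) * s (ω[k]) = π ((ω.take k).eraseIdx j) := by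
      rw [← hjt, ← List.getD_eq_getElem _ 1 hj]
      exact cs.wordProd_mul_getD_rightInvSeq _ j
    set σ' := (ω.take k).eraseIdx j ++ ω.drop (k+1) with hσ'
    have hπσ' : π σ' = π ω := by
      rw [hσ', cs.wordProd_append, ← herase]
      conv_rhs => rw [← List.take_append_drop (k+1) ω]
      rw [cs.wordProd_append, htake, cs.wordProd_append, cs.wordProd_singleton]
    have hsub : σ'.Sublist ω := by
      conv_rhs => rw [← List.take_append_drop (k+1) ω]
      apply List.Sublist.append
      · refine (List.eraseIdx_sublist _ j).trans ?_
        rw [htake]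
        exact List.sublist_append_left _ _
      · exact List.Sublist.refl _
    have hlenσ' : σ'.length ≤ n := by
      rw [hσ', List.length_append, List.length_eraseIdx, List.length_drop]
      rw [hlentake, if_pos hjk]
      omega
    obtain ⟨σ, hs1, hs2, hs3⟩ := ih σ' hlenσ'
    exact ⟨σ, hs1.trans hsub, hs2, hs3.trans hπσ'⟩

theorem exists_reduced_sublist (ω : List B) :
    ∃ σ, σ.Sublist ω ∧ cs.IsReduced σ ∧ π σ = π ω :=
  exists_reduced_sublist_aux cs ω.length ω le_rfl

/-- The "subword" direction of the subword property: anything Bruhat-below `w`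
appears as a reduced sublist of any reduced word for `w`. -/
theorem bruhat_to_sublist {u w : W} (h : BruhatLE cs u w) :
    ∀ ω : List B, cs.IsReduced ω → π ω = w →
      ∃ σ, σ.Sublist ω ∧ cs.IsReduced σ ∧ π σ = u := by
  induction h with
  | refl => exact fun ω hω hπ => ⟨ω, List.Sublist.refl ω, hω, hπ⟩
  | tail _ hbc ih =>
    intro ω hω hπ
    obtain ⟨⟨t, ht, hc⟩, hlen⟩ := hbc
    rename_i b c _
    have hbw : b = π ω * t := by
      rw [hπ, hc, mul_assoc, ht.mul_self, mul_one]
    have hlt : ℓ (π ω * t) < ℓ (π ω) := by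
      rw [← hbw, hπ]
      exact hlen
    have hmem := strong_exchange cs hω ht hlt
    obtain ⟨j, hj, hjt⟩ := List.getElem_of_mem hmem
    have herase : π ω * t = π (ω.eraseIdx j) := by
      rw [← hjt, ← List.getD_eq_getElem _ 1 hj]
      exact cs.wordProd_mul_getD_rightInvSeq _ j
    obtain ⟨σ₂, hσ₂sub, hσ₂red, hσ₂π⟩ := exists_reduced_sublist cs (ω.eraseIdx j)
    have hσ₂b : π σ₂ = b := by rw [hσ₂π, ← herase, ← hbw]
    obtain ⟨σ₃, h1, h2, h3⟩ := ih σ₂ hσ₂red hσ₂b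
    exact ⟨σ₃, h1.trans (hσ₂sub.trans (List.eraseIdx_sublist ω j)), h2, h3⟩

/-- Splitting a sublist of a concatenation with a single letter. -/
theorem sublist_concat_cases {σ ω : List B} {c : B} (h : σ.Sublist (ω ++ [c])) :
    σ.Sublist ω ∨ ∃ σ', σ = σ' ++ [c] ∧ σ'.Sublist ω := by
  rw [List.sublist_append_iff] at h
  obtain ⟨l₁, l₂, rfl, h₁, h₂⟩ := h
  rcases List.sublist_singleton.mp h₂ with rfl | rfl
  · left
    simpa using h₁
  · right
    exact ⟨l₁, rfl, h₁⟩

/-- The master induction establishing the subword property and the lifting property. -/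
theorem bruhat_core : ∀ n : ℕ,
    (∀ ω σ : List B, cs.IsReduced ω → ω.length ≤ n → σ.Sublist ω →
      BruhatLE cs (π σ) (π ω)) ∧
    (∀ x y : W, ∀ i : B, BruhatLE cs x y → ℓ x < ℓ (x * s i) → ℓ y < ℓ (y * s i) →
      ℓ (y * s i) ≤ n → BruhatLE cs (x * s i) (y * s i)) ∧
    (∀ x y : W, ∀ i : B, BruhatLE cs x y → ℓ (y * s i) < ℓ y → ℓ y ≤ n →
      BruhatLE cs (x * s i) y) := by
  intro n
  induction n with
  | zero =>
    refine ⟨?_, ?_, ?_⟩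
    · intro ω σ _ hlen hsub
      have hω : ω = [] := List.length_eq_zero_iff.mp (Nat.le_zero.mp hlen)
      subst hω
      have hσ : σ = [] := List.sublist_nil.mp hsub
      subst hσ
      exact bruhat_refl cs _
    · intro x y i _ _ hy hyn
      omega
    · intro x y i _ hdesc hyn
      omega
  | succ n ih =>
    obtain ⟨ihA, ihL1, ihL2⟩ := ih
    -- L1 at level n+1
    have l1 : ∀ x y : W, ∀ i : B, BruhatLE cs x y → ℓ x < ℓ (x * s i) → ℓ y < ℓ (y * s i) →
        ℓ (y * s i) ≤ n + 1 → BruhatLE cs (x * s i) (y * s i) := by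
      intro x y i hxy hx hy hyn
      induction hxy using Relation.ReflTransGen.head_induction_on with
      | refl => exact bruhat_refl cs _
      | head hac hcy ihc =>
        rename_i a c
        rcases Nat.lt_or_gt_of_ne (cs.length_mul_simple_ne c i) with hdn | hup
        · -- `s i` is a descent of `c`; use L2 at level n
          have hlc : ℓ c ≤ n := by
            have h1 : ℓ c ≤ ℓ y := bruhat_length_le cs hcy
            omega
          have h2 : BruhatLE cs (a * s i) c :=
            ihL2 a c i (Relation.ReflTransGen.single hac) hdn hlc
          refine bruhat_trans cs h2 (bruhat_trans cs hcy (bruhat_simple_up cs hy))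
        · -- `s i` is an ascent of `c`
          have h3 : BruhatLE cs (c * s i) (y * s i) := ihc hup
          refine bruhat_trans cs ?_ h3
          obtain ⟨⟨t, ht, hct⟩, hlac⟩ := hac
          have hconj : cs.IsReflection (s i * t * s i) := by
            have := ht.conj (s i)
            rwa [cs.inv_simple] at this
          have hstep : c * s i = (a * s i) * (s i * t * s i) := by
            rw [hct]
            simp only [mul_assoc, cs.simple_mul_simple_cancel_left]
          have hxlen : ℓ (a * s i) < ℓ (c * s i) := by
            have h4 : ℓ (a * s i) = ℓ a + 1 := by
              rcases cs.length_mul_simple a i with h | h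
              · exact h
              · omega
            have h5 : ℓ (c * s i) = ℓ c + 1 := by
              rcases cs.length_mul_simple c i with h | h
              · exact h
              · omega
            omega
          rw [hstep] at hxlen ⊢
          exact bruhat_step cs hconj hxlen
    -- A at level n+1
    have a1 : ∀ ω σ : List B, cs.IsReduced ω → ω.length ≤ n + 1 → σ.Sublist ω →
        BruhatLE cs (π σ) (π ω) := by
      intro ω
      induction ω using List.reverseRecOn with
      | nil =>
        intro σ _ _ hsub
        have hσ : σ = [] := List.sublist_nil.mp hsub
        subst hσ
        exact bruhat_refl cs _
      | append_singleton ω' c ihω =>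
        intro σ hred hlen hsub
        obtain ⟨τ, hτsub, hτred, hτπ⟩ := exists_reduced_sublist cs σ
        rw [← hτπ]
        have hτω := hτsub.trans hsub
        have hredω' : cs.IsReduced ω' := by
          have := CoxeterSystem.IsReduced.take hred ω'.length
          rwa [List.take_left] at this
        have hπω : π (ω' ++ [c]) = π ω' * s c := by
          rw [cs.wordProd_append, cs.wordProd_singleton]
        have hlω : ℓ (π (ω' ++ [c])) = ω'.length + 1 := by
          rw [hred]
          simp
        have hlω' : ℓ (π ω') = ω'.length := hredω'
        have hωup : ℓ (π ω') < ℓ (π ω' * s c) := by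
          rw [← hπω]
          omega
        rcases sublist_concat_cases hτω with hcase | ⟨τ', rfl, hτ'⟩
        · have h1 : BruhatLE cs (π τ) (π ω') := ihω τ hredω' (by simp at hlen; omega) hcase
          exact bruhat_trans cs h1 (by rw [hπω]; exact bruhat_simple_up cs hωup)
        · have hredτ' : cs.IsReduced τ' := by
            have := CoxeterSystem.IsReduced.take hτred τ'.length
            rwa [List.take_left] at this
          have h1 : BruhatLE cs (π τ') (π ω') := ihω τ' hredω' (by simp at hlen; omega) hτ'
          have hπτ : π (τ' ++ [c]) = π τ' * s c := by
            rw [cs.wordProd_append, cs.wordProd_singleton]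
          have hτup : ℓ (π τ') < ℓ (π τ' * s c) := by
            rw [← hπτ]
            rw [hτred, hredτ']
            simp
          rw [hπτ, hπω]
          exact l1 (π τ') (π ω') c h1 hτup hωup (by rw [← hπω, hlω]; simp at hlen; omega)
    -- L2 at level n+1
    have l2 : ∀ x y : W, ∀ i : B, BruhatLE cs x y → ℓ (y * s i) < ℓ y → ℓ y ≤ n + 1 →
        BruhatLE cs (x * s i) y := by
      intro x y i hxy hdesc hyn
      obtain ⟨ω₁, hω₁red, hω₁π⟩ := cs.exists_reduced_word' (y * s i)
      have hylen : ℓ y = ℓ (y * s i) + 1 := by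
        rcases cs.length_mul_simple y i with h | h
        · omega
        · omega
      have hπω : π (ω₁ ++ [i]) = y := by
        rw [cs.wordProd_append, cs.wordProd_singleton, ← hω₁π,
          cs.simple_mul_simple_cancel_right]
      have hredω : cs.IsReduced (ω₁ ++ [i]) := by
        show ℓ (π (ω₁ ++ [i])) = _
        rw [hπω, List.length_append]
        have : ω₁.length = ℓ (y * s i) := by rw [← hω₁red, ← hω₁π]
        simp [this]
        omega
      obtain ⟨σ, hσsub, hσred, hσπ⟩ := bruhat_to_sublist cs hxy (ω₁ ++ [i]) hredω hπω
      rcases sublist_concat_cases hσsub with hcase | ⟨σ', rfl, hσ'⟩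
      · -- x ≤ y * s i
        have e1 : ℓ (π ω₁) = ω₁.length := hω₁red
        rw [← hω₁π] at e1
        have hx_le : BruhatLE cs x (y * s i) := by
          rw [← hσπ, hω₁π]
          exact a1 ω₁ σ hω₁red (by omega) hcase
        rcases Nat.lt_or_gt_of_ne (cs.length_mul_simple_ne x i) with hxdn | hxup
        · exact bruhat_trans cs (bruhat_simple_down cs hxdn)
            (bruhat_trans cs hx_le (bruhat_simple_down cs hdesc))
        · have := l1 x (y * s i) i hx_le hxup
            (by rwa [cs.simple_mul_simple_cancel_right]) ?_
          · rwa [cs.simple_mul_simple_cancel_right] at this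
          · rw [cs.simple_mul_simple_cancel_right]
            omega
      · -- x * s i is a subword of the reduced word for y
        have hπσ' : π σ' = x * s i := by
          have : π (σ' ++ [i]) = x := hσπ
          rw [cs.wordProd_append, cs.wordProd_singleton] at this
          rw [← this, cs.simple_mul_simple_cancel_right]
        have e1 : ℓ (π ω₁) = ω₁.length := hω₁red
        rw [← hω₁π] at e1
        rw [← hπσ', ← hπω]
        exact a1 (ω₁ ++ [i]) σ' hredω (by
          rw [List.length_append]
          simp only [List.length_singleton]
          omega) (hσ'.trans (List.sublist_append_left _ _))
    exact ⟨a1, l1, l2⟩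

/-- Subword property: a sublist of a reduced word is Bruhat-below it. -/
theorem sublist_bruhat_le {ω σ : List B} (hred : cs.IsReduced ω) (hsub : σ.Sublist ω) :
    BruhatLE cs (π σ) (π ω) :=
  (bruhat_core cs ω.length).1 ω σ hred le_rfl hsub

/-- Lifting, ascent version. -/
theorem bruhat_lift_up {x y : W} {i : B} (hxy : BruhatLE cs x y)
    (hx : ℓ x < ℓ (x * s i)) (hy : ℓ y < ℓ (y * s i)) :
    BruhatLE cs (x * s i) (y * s i) :=
  (bruhat_core cs (ℓ (y * s i))).2.1 x y i hxy hx hy le_rfl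

/-- Lifting, descent version. -/
theorem bruhat_lift_down {x y : W} {i : B} (hxy : BruhatLE cs x y)
    (hdesc : ℓ (y * s i) < ℓ y) : BruhatLE cs (x * s i) y :=
  (bruhat_core cs (ℓ y)).2.2 x y i hxy hdesc le_rfl

/-- Lifting, dichotomy version. -/
theorem bruhat_lift_or {x y : W} {i : B} (hxy : BruhatLE cs x y)
    (hdesc : ℓ (y * s i) < ℓ y) :
    BruhatLE cs x (y * s i) ∨ (ℓ (x * s i) < ℓ x ∧ BruhatLE cs (x * s i) (y * s i)) := by
  obtain ⟨ω₁, hω₁red, hω₁π⟩ := cs.exists_reduced_word' (y * s i)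
  have hylen : ℓ y = ℓ (y * s i) + 1 := by
    rcases cs.length_mul_simple y i with h | h
    · omega
    · omega
  have hπω : π (ω₁ ++ [i]) = y := by
    rw [cs.wordProd_append, cs.wordProd_singleton, ← hω₁π, cs.simple_mul_simple_cancel_right]
  have hredω : cs.IsReduced (ω₁ ++ [i]) := by
    show ℓ (π (ω₁ ++ [i])) = _
    rw [hπω, List.length_append]
    have : ω₁.length = ℓ (y * s i) := by rw [← hω₁red, ← hω₁π]
    simp [this]
    omega
  obtain ⟨σ, hσsub, hσred, hσπ⟩ := bruhat_to_sublist cs hxy (ω₁ ++ [i]) hredω hπω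
  rcases sublist_concat_cases hσsub with hcase | ⟨σ', rfl, hσ'⟩
  · left
    rw [← hσπ, hω₁π]
    exact sublist_bruhat_le cs hω₁red hcase
  · right
    have hπσ' : π σ' = x * s i := by
      have h0 : π (σ' ++ [i]) = x := hσπ
      rw [cs.wordProd_append, cs.wordProd_singleton] at h0
      rw [← h0, cs.simple_mul_simple_cancel_right]
    have hredσ' : cs.IsReduced σ' := by
      have := CoxeterSystem.IsReduced.take hσred σ'.length
      rwa [List.take_left] at this
    constructor
    · have h1 : ℓ (π (σ' ++ [i])) = σ'.length + 1 := by
        rw [hσred]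
        simp
      have h2 : ℓ (π σ') = σ'.length := hredσ'
      rw [hσπ] at h1
      rw [hπσ'] at h2
      omega
    · rw [← hπσ', hω₁π]
      exact sublist_bruhat_le cs hω₁red hσ'

/-! ### Left-handed versions -/

theorem bruhat_lift_down_left {x y : W} {i : B} (hxy : BruhatLE cs x y)
    (hdesc : ℓ (s i * y) < ℓ y) : BruhatLE cs (s i * x) y := by
  have h1 : BruhatLE cs x⁻¹ y⁻¹ := bruhat_inv cs hxy
  have h2 : ℓ (y⁻¹ * s i) < ℓ y⁻¹ := by
    rw [show y⁻¹ * s i = (s i * y)⁻¹ by rw [mul_inv_rev, cs.inv_simple], cs.length_inv,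
      cs.length_inv]
    exact hdesc
  have h3 := bruhat_lift_down cs h1 h2
  have h4 := bruhat_inv cs h3
  rwa [mul_inv_rev, cs.inv_simple, inv_inv, inv_inv] at h4

theorem bruhat_lift_or_left {x y : W} {i : B} (hxy : BruhatLE cs x y)
    (hdesc : ℓ (s i * y) < ℓ y) :
    BruhatLE cs x (s i * y) ∨ (ℓ (s i * x) < ℓ x ∧ BruhatLE cs (s i * x) (s i * y)) := by
  have h1 : BruhatLE cs x⁻¹ y⁻¹ := bruhat_inv cs hxy
  have h2 : ℓ (y⁻¹ * s i) < ℓ y⁻¹ := by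
    rw [show y⁻¹ * s i = (s i * y)⁻¹ by rw [mul_inv_rev, cs.inv_simple], cs.length_inv,
      cs.length_inv]
    exact hdesc
  rcases bruhat_lift_or cs h1 h2 with h3 | ⟨h3, h4⟩
  · left
    have h4 := bruhat_inv cs h3
    rwa [mul_inv_rev, cs.inv_simple, inv_inv, inv_inv] at h4
  · right
    constructor
    · rwa [show x⁻¹ * s i = (s i * x)⁻¹ by rw [mul_inv_rev, cs.inv_simple], cs.length_inv,
        cs.length_inv] at h3
    · have h5 := bruhat_inv cs h4
      simp only [mul_inv_rev, cs.inv_simple, inv_inv] at h5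
      exact h5


/-! ### Demazure products -/

theorem le_demStep (x : W) (i : B) : BruhatLE cs x (demStep cs x i) := by
  unfold demStep
  split
  · exact bruhat_simple_up cs ‹_›
  · exact bruhat_refl cs x

theorem demStep_mono {x y : W} (i : B) (h : BruhatLE cs x y) :
    BruhatLE cs (demStep cs x i) (demStep cs y i) := by
  unfold demStep
  split_ifs with hx hy hy
  · exact bruhat_lift_up cs h hx hy
  · have hydn : ℓ (y * s i) < ℓ y :=
      lt_of_le_of_ne (by omega) (cs.length_mul_simple_ne y i)
    exact bruhat_lift_down cs h hydn
  · exact bruhat_trans cs h (bruhat_simple_up cs hy)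
  · exact h

theorem le_demWord (x : W) (l : List B) : BruhatLE cs x (demWord cs x l) := by
  induction l generalizing x with
  | nil => exact bruhat_refl cs x
  | cons i l ih =>
    exact bruhat_trans cs (le_demStep cs x i) (ih (demStep cs x i))

theorem demWord_mono (l : List B) {x y : W} (h : BruhatLE cs x y) :
    BruhatLE cs (demWord cs x l) (demWord cs y l) := by
  induction l generalizing x y with
  | nil => exact h
  | cons i l ih => exact ih (demStep_mono cs i h)

theorem demWord_append (x : W) (l₁ l₂ : List B) :
    demWord cs x (l₁ ++ l₂) = demWord cs (demWord cs x l₁) l₂ :=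
  List.foldl_append

theorem demWord_concat (x : W) (l : List B) (c : B) :
    demWord cs x (l ++ [c]) = demStep cs (demWord cs x l) c :=
  demWord_append cs x l [c]

theorem demWord_sub {l : List B} (hred : cs.IsReduced l) (x : W) :
    ∃ z, BruhatLE cs z (π l) ∧ demWord cs x l = x * z := by
  induction l using List.reverseRecOn with
  | nil => exact ⟨1, bruhat_refl cs _, (mul_one x).symm⟩
  | append_singleton l' c ih =>
    have hred' : cs.IsReduced l' := by
      have := CoxeterSystem.IsReduced.take hred l'.length
      rwa [List.take_left] at this
    obtain ⟨z, hz, he⟩ := ih hred'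
    have hπ : π (l' ++ [c]) = π l' * s c := by
      rw [cs.wordProd_append, cs.wordProd_singleton]
    have hup : ℓ (π l') < ℓ (π l' * s c) := by
      have h1 : ℓ (π (l' ++ [c])) = l'.length + 1 := by
        rw [hred]
        simp
      have h2 : ℓ (π l') = l'.length := hred'
      rw [hπ] at h1
      omega
    rw [demWord_concat, he]
    unfold demStep
    split_ifs with hstep
    · refine ⟨z * s c, ?_, by rw [mul_assoc]⟩
      rw [hπ]
      rcases Nat.lt_or_gt_of_ne (cs.length_mul_simple_ne z c) with hdn | hup2
      · exact bruhat_trans cs (bruhat_simple_down cs hdn)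
          (bruhat_trans cs hz (bruhat_simple_up cs hup))
      · exact bruhat_lift_up cs hz hup2 hup
    · exact ⟨z, bruhat_trans cs hz (by rw [hπ]; exact bruhat_simple_up cs hup), rfl⟩

theorem mul_le_demWord {l : List B} (hred : cs.IsReduced l) (x : W) :
    ∀ z, BruhatLE cs z (π l) → BruhatLE cs (x * z) (demWord cs x l) := by
  induction l using List.reverseRecOn with
  | nil =>
    intro z hz
    have h0 : ℓ z = 0 := by
      have := bruhat_length_le cs hz
      simpa using this
    have : z = 1 := cs.length_eq_zero_iff.mp h0
    rw [this, mul_one]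
    exact bruhat_refl cs x
  | append_singleton l' c ih =>
    intro z hz
    have hred' : cs.IsReduced l' := by
      have := CoxeterSystem.IsReduced.take hred l'.length
      rwa [List.take_left] at this
    have hπ : π (l' ++ [c]) = π l' * s c := by
      rw [cs.wordProd_append, cs.wordProd_singleton]
    have hup : ℓ (π l') < ℓ (π l' * s c) := by
      have h1 : ℓ (π (l' ++ [c])) = l'.length + 1 := by
        rw [hred]
        simp
      have h2 : ℓ (π l') = l'.length := hred'
      rw [hπ] at h1
      omega
    have hdesc : ℓ (π (l' ++ [c]) * s c) < ℓ (π (l' ++ [c])) := by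
      rw [hπ, cs.simple_mul_simple_cancel_right]
      exact hup
    rw [hπ] at hz
    rw [demWord_concat]
    rcases bruhat_lift_or cs (show BruhatLE cs z (π l' * s c) from hz)
        (by rwa [cs.simple_mul_simple_cancel_right]) with hcase | ⟨hzdn, hcase⟩
    · -- z ≤ π l'
      rw [cs.simple_mul_simple_cancel_right] at hcase
      have h3 : BruhatLE cs (x * z) (demWord cs x l') := ih hred' z hcase
      exact bruhat_trans cs h3 (le_demStep cs _ c)
    · -- z * s c ≤ π l'
      rw [cs.simple_mul_simple_cancel_right] at hcase
      have h3 : BruhatLE cs (x * (z * s c)) (demWord cs x l') := ih hred' _ hcase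
      rw [← mul_assoc] at h3
      unfold demStep
      split_ifs with hstep
      · rcases Nat.lt_or_gt_of_ne (cs.length_mul_simple_ne (x * z * s c) c) with hd | hu
        · rw [cs.simple_mul_simple_cancel_right] at hd
          exact bruhat_trans cs (bruhat_simple_up cs hd)
            (bruhat_trans cs h3 (bruhat_simple_up cs hstep))
        · have h4 := bruhat_lift_up cs h3 hu hstep
          rwa [cs.simple_mul_simple_cancel_right] at h4
      · have h4 := bruhat_lift_down cs h3 (by
          rcases Nat.lt_or_gt_of_ne (cs.length_mul_simple_ne (demWord cs x l') c) with h | h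
          · exact h
          · omega)
        rwa [cs.simple_mul_simple_cancel_right] at h4

theorem dem_word_spec (y : W) :
    cs.IsReduced (Classical.choose (cs.exists_reduced_word y)) ∧
      π (Classical.choose (cs.exists_reduced_word y)) = y := by
  obtain ⟨h1, h2⟩ := Classical.choose_spec (cs.exists_reduced_word y)
  constructor
  · show ℓ (π _) = _
    exact h1
  · exact h2.symm

theorem dem_mono_left {x x' : W} (y : W) (h : BruhatLE cs x' x) :
    BruhatLE cs (dem cs x' y) (dem cs x y) :=
  demWord_mono cs _ h

theorem dem_mono_right (x : W) {y y' : W} (h : BruhatLE cs y' y) :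
    BruhatLE cs (dem cs x y') (dem cs x y) := by
  obtain ⟨hred', hπ'⟩ := dem_word_spec cs y'
  obtain ⟨hred, hπ⟩ := dem_word_spec cs y
  obtain ⟨z, hz, he⟩ := demWord_sub cs hred' x
  show BruhatLE cs (demWord cs x _) (demWord cs x _)
  rw [he]
  apply mul_le_demWord cs hred
  rw [hπ]
  exact bruhat_trans cs (by rwa [hπ'] at hz) h


/-! ### Parabolic subgroups and double cosets -/

theorem simple_mem_parabolic {I : Set B} {i : B} (hi : i ∈ I) :
    s i ∈ parabolic cs I :=
  Subgroup.subset_closure ⟨i, hi, rfl⟩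

theorem submonoid_simple_inv_mem {I : Set B} {x : W}
    (hx : x ∈ Submonoid.closure (cs.simple '' I)) :
    x⁻¹ ∈ Submonoid.closure (cs.simple '' I) := by
  induction hx using Submonoid.closure_induction with
  | mem z hz =>
    obtain ⟨i, hi, rfl⟩ := hz
    rw [cs.inv_simple]
    exact Submonoid.subset_closure ⟨i, hi, rfl⟩
  | one =>
    rw [inv_one]
    exact Submonoid.one_mem _
  | mul u v _ _ hu hv =>
    rw [mul_inv_rev]
    exact Submonoid.mul_mem _ hv hu

theorem parabolic_mem_submonoid {I : Set B} {a : W} (ha : a ∈ parabolic cs I) :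
    a ∈ Submonoid.closure (cs.simple '' I) := by
  induction ha using Subgroup.closure_induction with
  | mem x hx => exact Submonoid.subset_closure hx
  | one => exact Submonoid.one_mem _
  | mul x y _ _ hx hy => exact Submonoid.mul_mem _ hx hy
  | inv x _ hx => exact submonoid_simple_inv_mem cs hx

/-- Closure induction for parabolic subgroups, tailored to left multiplication. -/
theorem parabolic_induction {I : Set B} {P : W → Prop}
    (hstep : ∀ i ∈ I, ∀ w, P w → P (s i * w))
    {a : W} (ha : a ∈ parabolic cs I) : ∀ w, P w → P (a * w) := by
  have ha' := parabolic_mem_submonoid cs ha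
  clear ha
  induction ha' using Submonoid.closure_induction with
  | mem x hx =>
    obtain ⟨i, hi, rfl⟩ := hx
    exact fun w hw => hstep i hi w hw
  | one => intro w hw; rwa [one_mul]
  | mul x y _ _ hx hy =>
    intro w hw
    rw [mul_assoc]
    exact hx _ (hy w hw)

/-- Closure induction for parabolic subgroups, tailored to right multiplication. -/
theorem parabolic_induction_right {J : Set B} {P : W → Prop}
    (hstep : ∀ j ∈ J, ∀ w, P w → P (w * s j))
    {b : W} (hb : b ∈ parabolic cs J) : ∀ w, P w → P (w * b) := by
  have hb' := parabolic_mem_submonoid cs hb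
  clear hb
  induction hb' using Submonoid.closure_induction with
  | mem x hx =>
    obtain ⟨j, hj, rfl⟩ := hx
    exact fun w hw => hstep j hj w hw
  | one => intro w hw; rwa [mul_one]
  | mul x y _ _ hx hy =>
    intro w hw
    rw [← mul_assoc]
    exact hy _ (hx w hw)

theorem mem_doset_self (I J : Set B) (w : W) : w ∈ doset cs I J w :=
  ⟨1, Subgroup.one_mem _, 1, Subgroup.one_mem _, by simp⟩

theorem simple_mul_mem_doset {I J : Set B} {w x : W} {i : B} (hi : i ∈ I)
    (hx : x ∈ doset cs I J w) : s i * x ∈ doset cs I J w := by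
  obtain ⟨a, ha, b, hb, rfl⟩ := hx
  exact ⟨s i * a, Subgroup.mul_mem _ (simple_mem_parabolic cs hi) ha, b, hb, by
    simp only [mul_assoc]⟩

theorem mem_doset_mul_simple {I J : Set B} {w x : W} {j : B} (hj : j ∈ J)
    (hx : x ∈ doset cs I J w) : x * s j ∈ doset cs I J w := by
  obtain ⟨a, ha, b, hb, rfl⟩ := hx
  exact ⟨a, ha, b * s j, Subgroup.mul_mem _ hb (simple_mem_parabolic cs hj), by
    simp only [mul_assoc]⟩

theorem doset_transfer {I J : Set B} {w m V : W} (hm : m ∈ doset cs I J w)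
    (hV : V ∈ doset cs I J w) :
    ∃ a ∈ parabolic cs I, ∃ b ∈ parabolic cs J, V = a * m * b := by
  obtain ⟨a2, ha2, b2, hb2, rfl⟩ := hm
  obtain ⟨a1, ha1, b1, hb1, rfl⟩ := hV
  refine ⟨a1 * a2⁻¹, Subgroup.mul_mem _ ha1 (Subgroup.inv_mem _ ha2),
    b2⁻¹ * b1, Subgroup.mul_mem _ (Subgroup.inv_mem _ hb2) hb1, ?_⟩
  simp only [mul_assoc, inv_mul_cancel_left]
  rw [mul_inv_cancel_left]

/-- Any simple reflection in `I` is a left descent of the maximum of an `(I,J)`-coset. -/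
theorem max_left_descent {I J : Set B} {w V : W} (hV : IsMaxOf cs (doset cs I J w) V)
    {i : B} (hi : i ∈ I) : ℓ (s i * V) < ℓ V := by
  have hmem : s i * V ∈ doset cs I J w := simple_mul_mem_doset cs hi hV.1
  have hle : BruhatLE cs (s i * V) V := hV.2 _ hmem
  have := bruhat_length_le cs hle
  exact lt_of_le_of_ne this (cs.length_simple_mul_ne V i)

theorem max_right_descent {I J : Set B} {w V : W} (hV : IsMaxOf cs (doset cs I J w) V)
    {j : B} (hj : j ∈ J) : ℓ (V * s j) < ℓ V := by
  have hmem : V * s j ∈ doset cs I J w := mem_doset_mul_simple cs hj hV.1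
  have hle : BruhatLE cs (V * s j) V := hV.2 _ hmem
  have := bruhat_length_le cs hle
  exact lt_of_le_of_ne this (cs.length_mul_simple_ne V j)

/-- If every simple reflection of `I` (resp. `J`) is a left (resp. right) descent of
`V`, then `W_I · {u ≤ V} · W_J` stays below `V`. -/
theorem bruhat_le_of_parabolic_mul {I J : Set B} {V : W}
    (hIdesc : ∀ i ∈ I, ℓ (s i * V) < ℓ V) (hJdesc : ∀ j ∈ J, ℓ (V * s j) < ℓ V)
    {a b u : W} (ha : a ∈ parabolic cs I) (hb : b ∈ parabolic cs J)
    (hu : BruhatLE cs u V) : BruhatLE cs (a * u * b) V := by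
  have hleft : ∀ w, BruhatLE cs w V → BruhatLE cs (a * w) V :=
    parabolic_induction cs (P := fun w => BruhatLE cs w V)
      (fun i hi w hw => bruhat_lift_down_left cs hw (hIdesc i hi)) ha
  have hright : ∀ w, BruhatLE cs w V → BruhatLE cs (w * b) V :=
    parabolic_induction_right cs (P := fun w => BruhatLE cs w V)
      (fun j hj w hw => bruhat_lift_down cs hw (hJdesc j hj)) hb
  exact hright _ (hleft u hu)


theorem bruhat_simple_up_left {u : W} {i : B} (h : ℓ u < ℓ (s i * u)) :
    BruhatLE cs u (s i * u) := by
  have h2 : ℓ u⁻¹ < ℓ (u⁻¹ * s i) := by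
    rw [show u⁻¹ * s i = (s i * u)⁻¹ by rw [mul_inv_rev, cs.inv_simple], cs.length_inv,
      cs.length_inv]
    exact h
  have h3 := bruhat_inv cs (bruhat_simple_up cs h2)
  simp only [mul_inv_rev, cs.inv_simple, inv_inv] at h3
  exact h3

/-- The minimum of a double coset stays below products by parabolic elements. -/
theorem min_le_parabolic_mul {K L : Set B} {x0 m : W}
    (hm : IsMinOf cs (doset cs K L x0) m) {a b : W}
    (ha : a ∈ parabolic cs K) (hb : b ∈ parabolic cs L) :
    ∀ u, BruhatLE cs m u → BruhatLE cs m (a * u * b) := by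
  have hleftstep : ∀ k ∈ K, ∀ u, BruhatLE cs m u → BruhatLE cs m (s k * u) := by
    intro k hk u hmu
    rcases Nat.lt_or_gt_of_ne (cs.length_simple_mul_ne u k) with hdn | hup
    · rcases bruhat_lift_or_left cs hmu hdn with h | ⟨hmdn, _⟩
      · exact h
      · exfalso
        have hmem : s k * m ∈ doset cs K L x0 := simple_mul_mem_doset cs hk hm.1
        have := bruhat_length_le cs (hm.2 _ hmem)
        omega
    · exact bruhat_trans cs hmu (bruhat_simple_up_left cs hup)
  have hrightstep : ∀ l ∈ L, ∀ u, BruhatLE cs m u → BruhatLE cs m (u * s l) := by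
    intro l hl u hmu
    rcases Nat.lt_or_gt_of_ne (cs.length_mul_simple_ne u l) with hdn | hup
    · rcases bruhat_lift_or cs hmu hdn with h | ⟨hmdn, _⟩
      · exact h
      · exfalso
        have hmem : m * s l ∈ doset cs K L x0 := mem_doset_mul_simple cs hl hm.1
        have := bruhat_length_le cs (hm.2 _ hmem)
        omega
    · exact bruhat_trans cs hmu (bruhat_simple_up cs hup)
  intro u hmu
  have h1 : BruhatLE cs m (a * u) :=
    parabolic_induction cs (P := fun w => BruhatLE cs m w) hleftstep ha u hmu
  exact parabolic_induction_right cs (P := fun w => BruhatLE cs m w) hrightstep hb (a * u) h1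

/-- If `q' ≤ q` as `(I,J)`-cosets, `p` a `(K,I)`-coset and `r` a `(J,L)`-coset,
then `p * q' * r ≤ p * q * r` in the Bruhat order on `(K,L)`-cosets. -/
theorem star_bruhat_monotone (cs : CoxeterSystem M W) (I J K L : Set B)
    (hI : Finitary cs I) (hJ : Finitary cs J) (hK : Finitary cs K) (hL : Finitary cs L)
    (wp wq wq' wr mq mq' Mp Mq Mq' Mr : W)
    (hmq : IsMinOf cs (doset cs I J wq) mq)
    (hmq' : IsMinOf cs (doset cs I J wq') mq')
    (hle : BruhatLE cs mq' mq)
    (hMp : IsMaxOf cs (doset cs K I wp) Mp)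
    (hMq : IsMaxOf cs (doset cs I J wq) Mq)
    (hMq' : IsMaxOf cs (doset cs I J wq') Mq')
    (hMr : IsMaxOf cs (doset cs J L wr) Mr) :
    ∀ m1 m2, IsMinOf cs (doset cs K L (dem cs (dem cs Mp Mq') Mr)) m1 →
      IsMinOf cs (doset cs K L (dem cs (dem cs Mp Mq) Mr)) m2 →
      BruhatLE cs m1 m2 := by
  intro m1 m2 hm1 hm2
  have hmqMq : BruhatLE cs mq Mq := hMq.2 mq hmq.1
  have hmq'Mq : BruhatLE cs mq' Mq := bruhat_trans cs hle hmqMq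
  obtain ⟨a, ha, b, hb, hMq'e⟩ := doset_transfer cs hmq'.1 hMq'.1
  have hMq'le : BruhatLE cs Mq' Mq := by
    rw [hMq'e]
    exact bruhat_le_of_parabolic_mul cs (fun i hi => max_left_descent cs hMq hi)
      (fun j hj => max_right_descent cs hMq hj) ha hb hmq'Mq
  have h1 := dem_mono_right cs Mp hMq'le
  have h2 := dem_mono_left cs Mr h1
  have hm1D' : BruhatLE cs m1 (dem cs (dem cs Mp Mq') Mr) :=
    hm1.2 _ (mem_doset_self cs K L _)
  have hm1D : BruhatLE cs m1 (dem cs (dem cs Mp Mq) Mr) := bruhat_trans cs hm1D' h2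
  obtain ⟨a2, ha2, b2, hb2, hm2e⟩ := hm2.1
  rw [hm2e]
  exact min_le_parabolic_mul cs hm1 ha2 hb2 _ hm1D


end CoxeterPaper
end
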